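/- arXiv:1306.1187 — 5 statements merged into one kernel-verified Lean document; each statement's English description precedes it below -/
import Mathlib

section
/- Lemma 2: Let θ, W, X1, X2 be random variables on a common probability space with standard Borel value spaces, and let T be a measurable function of the pair (X1, X2). If θ and (X1, X2) are conditionally independent given W, and W and (X1, X2) are conditionally independent given T(X1, X2) (i.e., T(X1, X2) is sufficient for W with respect to (X1, X2)), then θ and (X1, X2) are conditionally independent given T(X1, X2). -/
open MeasureTheory ProbabilityTheory

namespace MarkovAux

variable {Ω : Type*} {m0 : MeasurableSpace Ω} {μ : Measure Ω} [IsProbabilityMeasure μ]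

/-- real indicator -/
noncomputable def ind (S : Set Ω) : Ω → ℝ := S.indicator fun _ => 1

lemma ind_norm_le (S : Set Ω) (ω : Ω) : ‖ind S ω‖ ≤ 1 := by
  unfold ind; by_cases h : ω ∈ S <;> simp [h]

lemma ind_mul (S : Set Ω) (f : Ω → ℝ) :
    S.indicator f = fun ω => ind S ω * f ω := by
  funext ω; by_cases h : ω ∈ S <;> simp [ind, h]

lemma ind_inter (S U : Set Ω) : ind (S ∩ U) = fun ω => ind S ω * ind U ω := by
  funext ω
  by_cases hS : ω ∈ S <;> by_cases hU : ω ∈ U <;> simp [ind, hS, hU, Set.mem_inter_iff]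

lemma intInd {S : Set Ω} (hS : MeasurableSet S) : Integrable (ind S) μ :=
  (integrable_const (1:ℝ)).indicator hS

lemma condexp_bdd {m : MeasurableSpace Ω} {f : Ω → ℝ} (hf : ∀ᵐ ω ∂μ, ‖f ω‖ ≤ 1) :
    ∀ᵐ ω ∂μ, ‖(μ[f|m]) ω‖ ≤ 1 := by
  have h := ae_bdd_condExp_of_ae_bdd (m := m) (μ := μ) (R := 1) (f := f)
    (by filter_upwards [hf] with ω hω; simpa [Real.norm_eq_abs] using hω)
  simpa [Real.norm_eq_abs] using h

lemma condexp_ind_bdd {m : MeasurableSpace Ω} (S : Set Ω) :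
    ∀ᵐ ω ∂μ, ‖(μ[ind S|m]) ω‖ ≤ 1 :=
  condexp_bdd (Filter.Eventually.of_forall fun ω => ind_norm_le S ω)

/-- pull-out in integral form: `∫ f ⬝ E[g|m] = ∫ f ⬝ g` for `f` `m`-measurable bdd. -/
lemma integral_mul_condexp {m : MeasurableSpace Ω} (hm : m ≤ m0) {f g : Ω → ℝ}
    (hf : StronglyMeasurable[m] f) (hfb : ∀ᵐ ω ∂μ, ‖f ω‖ ≤ 1) (hg : Integrable g μ) :
    ∫ ω, f ω * (μ[g|m]) ω ∂μ = ∫ ω, f ω * g ω ∂μ := by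
  have hfg : Integrable (f * g) μ :=
    hg.bdd_mul ((hf.mono hm).aestronglyMeasurable) hfb
  have h := condExp_mul_of_stronglyMeasurable_left (μ := μ) hf hfg hg
  calc ∫ ω, f ω * (μ[g|m]) ω ∂μ = ∫ ω, (μ[f * g|m]) ω ∂μ := (integral_congr_ae (by
        filter_upwards [h] with ω hω; simpa using hω.symm))
    _ = ∫ ω, (f * g) ω ∂μ := integral_condExp hm
    _ = ∫ ω, f ω * g ω ∂μ := rfl

end MarkovAux

namespace MarkovAux

set_option maxHeartbeats 1000000 in
theorem markov_contraction {Ω : Type*} {mW mT mX : MeasurableSpace Ω}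
    {m0 : MeasurableSpace Ω} {μ : Measure Ω} [IsProbabilityMeasure μ]
    (hW : mW ≤ m0) (hX : mX ≤ m0) (hTX : mT ≤ mX)
    {A : Set Ω} (hA : MeasurableSet[m0] A)
    (h1 : ∀ u, MeasurableSet[mX] u →
      (μ[ind (A ∩ u)|mW]) =ᵐ[μ] fun ω => (μ[ind A|mW]) ω * (μ[ind u|mW]) ω)
    (h2 : ∀ D u, MeasurableSet[mW] D → MeasurableSet[mX] u →
      (μ[ind (D ∩ u)|mT]) =ᵐ[μ] fun ω => (μ[ind D|mT]) ω * (μ[ind u|mT]) ω)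
    {B : Set Ω} (hB : MeasurableSet[mX] B) :
    (μ[ind (A ∩ B)|mT]) =ᵐ[μ] fun ω => (μ[ind A|mT]) ω * (μ[ind B|mT]) ω := by
  have hT : mT ≤ m0 := hTX.trans hX
  set g : Ω → ℝ := μ[ind A|mW] with hg_def
  have hg_int : Integrable g μ := integrable_condExp
  have hg_sm : StronglyMeasurable[mW] g := stronglyMeasurable_condExp
  have hg_ae : AEStronglyMeasurable g μ := (hg_sm.mono hW).aestronglyMeasurable
  have hg_bdd : ∀ᵐ ω ∂μ, ‖g ω‖ ≤ 1 := condexp_ind_bdd A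
  -- Fact I
  have FactI : ∀ u, MeasurableSet[mX] u →
      ∫ ω, g ω * ind u ω ∂μ = ∫ ω, ind (A ∩ u) ω ∂μ := by
    intro u hu
    have hu0 : MeasurableSet[m0] u := hX u hu
    calc ∫ ω, g ω * ind u ω ∂μ
        = ∫ ω, g ω * (μ[ind u|mW]) ω ∂μ :=
          (integral_mul_condexp hW hg_sm hg_bdd (intInd hu0)).symm
      _ = ∫ ω, (μ[ind (A ∩ u)|mW]) ω ∂μ := (integral_congr_ae (h1 u hu)).symm
      _ = ∫ ω, ind (A ∩ u) ω ∂μ := integral_condExp hW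
  -- Fact II
  have FactII : ∀ u, MeasurableSet[mX] u →
      ∫ ω, g ω * ind u ω ∂μ = ∫ ω, g ω * (μ[ind u|mT]) ω ∂μ := by
    intro u hu
    have hu0 : MeasurableSet[m0] u := hX u hu
    set k : Ω → ℝ := μ[ind u|mT] with hk_def
    have hk_int : Integrable k μ := integrable_condExp
    have hk_bdd : ∀ᵐ ω ∂μ, ‖k ω‖ ≤ 1 := condexp_ind_bdd u
    set h : Ω → ℝ := fun ω => ind u ω - k ω with hh_def
    have hh_int : Integrable h μ := (intInd hu0).sub hk_int
    have hDeq : ∀ D, MeasurableSet[mW] D → μ D < ⊤ →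
        ∫ x in D, (0:Ω → ℝ) x ∂μ = ∫ x in D, h x ∂μ := by
      intro D hD _
      have hD0 : MeasurableSet[m0] D := hW D hD
      have e1 : ∫ x in D, ind u x ∂μ = ∫ x, ind (D ∩ u) x ∂μ := by
        rw [← integral_indicator hD0]
        congr 1
        show D.indicator (u.indicator fun _ => (1:ℝ)) = ind (D ∩ u)
        rw [Set.indicator_indicator]; rfl
      have e2 : ∫ x in D, k x ∂μ = ∫ x, ind (D ∩ u) x ∂μ := by
        rw [← integral_indicator hD0, ind_mul]
        calc ∫ ω, ind D ω * k ω ∂μ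
            = ∫ ω, k ω * ind D ω ∂μ := by simp_rw [mul_comm]
          _ = ∫ ω, k ω * (μ[ind D|mT]) ω ∂μ :=
              (integral_mul_condexp hT stronglyMeasurable_condExp hk_bdd (intInd hD0)).symm
          _ = ∫ ω, (μ[ind D|mT]) ω * (μ[ind u|mT]) ω ∂μ := by
              simp_rw [hk_def]; simp_rw [mul_comm]
          _ = ∫ ω, (μ[ind (D ∩ u)|mT]) ω ∂μ := (integral_congr_ae (h2 D u hD hu)).symm
          _ = ∫ ω, ind (D ∩ u) ω ∂μ := integral_condExp hT
      have : ∫ x in D, h x ∂μ = ∫ x in D, ind u x ∂μ - ∫ x in D, k x ∂μ :=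
        integral_sub ((intInd hu0).integrableOn) (hk_int.integrableOn)
      simp [this, e1, e2]
    have h0 : (0 : Ω → ℝ) =ᵐ[μ] μ[h|mW] :=
      ae_eq_condExp_of_forall_setIntegral_eq hW hh_int
        (fun s _ _ => (integrable_zero _ _ _).integrableOn) hDeq
        ((stronglyMeasurable_zero).aestronglyMeasurable)
    have key : ∫ ω, g ω * h ω ∂μ = 0 := by
      rw [← integral_mul_condexp hW hg_sm hg_bdd hh_int]
      calc ∫ ω, g ω * (μ[h|mW]) ω ∂μ = ∫ ω, (0:ℝ) ∂μ := by
            refine integral_congr_ae ?_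
            filter_upwards [h0] with ω hω
            rw [← hω]; simp
        _ = 0 := integral_zero _ _
    have hsplit : ∫ ω, g ω * h ω ∂μ
        = ∫ ω, g ω * ind u ω ∂μ - ∫ ω, g ω * k ω ∂μ := by
      rw [← integral_sub ((intInd hu0).bdd_mul hg_ae hg_bdd) (hk_int.bdd_mul hg_ae hg_bdd)]
      refine integral_congr_ae (Filter.Eventually.of_forall fun ω => ?_)
      simp [hh_def]; ring
    have := hsplit ▸ key
    linarith [this]
  -- Claim 1
  have intA : Integrable (ind A) μ := intInd hA
  have Claim1 : μ[g|mX] =ᵐ[μ] μ[ind A|mX] := by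
    refine ae_eq_condExp_of_forall_setIntegral_eq hX intA
      (fun s _ _ => integrable_condExp.integrableOn) (fun u hu _ => ?_)
      (stronglyMeasurable_condExp.aestronglyMeasurable)
    have hu0 : MeasurableSet[m0] u := hX u hu
    rw [setIntegral_condExp hX hg_int hu]
    calc ∫ x in u, g x ∂μ = ∫ x, u.indicator g x ∂μ := (integral_indicator hu0).symm
      _ = ∫ x, g x * ind u x ∂μ := by rw [ind_mul]; simp_rw [mul_comm]
      _ = ∫ x, ind (A ∩ u) x ∂μ := FactI u hu
      _ = ∫ x, u.indicator (ind A) x ∂μ := by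
          rw [Set.inter_comm]
          congr 1
          show ind (u ∩ A) = u.indicator (A.indicator fun _ => (1:ℝ))
          rw [Set.indicator_indicator]; rfl
      _ = ∫ x in u, ind A x ∂μ := integral_indicator hu0
  -- Claim 2
  have Claim2 : μ[g|mT] =ᵐ[μ] μ[g|mX] := by
    refine ae_eq_condExp_of_forall_setIntegral_eq hX hg_int
      (fun s _ _ => integrable_condExp.integrableOn) (fun u hu _ => ?_)
      ((stronglyMeasurable_condExp.mono hTX).aestronglyMeasurable)
    have hu0 : MeasurableSet[m0] u := hX u hu
    have hgT_bdd : ∀ᵐ ω ∂μ, ‖(μ[g|mT]) ω‖ ≤ 1 := condexp_bdd hg_bdd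
    calc ∫ x in u, (μ[g|mT]) x ∂μ
        = ∫ x, u.indicator (μ[g|mT]) x ∂μ := (integral_indicator hu0).symm
      _ = ∫ x, (μ[g|mT]) x * ind u x ∂μ := by rw [ind_mul]; simp_rw [mul_comm]
      _ = ∫ x, (μ[g|mT]) x * (μ[ind u|mT]) x ∂μ :=
          (integral_mul_condexp hT stronglyMeasurable_condExp hgT_bdd (intInd hu0)).symm
      _ = ∫ x, (μ[ind u|mT]) x * (μ[g|mT]) x ∂μ := by simp_rw [mul_comm]
      _ = ∫ x, (μ[ind u|mT]) x * g x ∂μ :=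
          integral_mul_condexp hT stronglyMeasurable_condExp (condexp_ind_bdd u) hg_int
      _ = ∫ x, g x * (μ[ind u|mT]) x ∂μ := by simp_rw [mul_comm]
      _ = ∫ x, g x * ind u x ∂μ := (FactII u hu).symm
      _ = ∫ x, u.indicator g x ∂μ := by rw [ind_mul]; simp_rw [mul_comm]
      _ = ∫ x in u, g x ∂μ := integral_indicator hu0
  -- Claim 3
  have Claim3 : μ[ind A|mT] =ᵐ[μ] μ[g|mT] :=
    ((condExp_condExp_of_le hTX hX).symm.trans
      (condExp_congr_ae Claim1.symm)).trans (condExp_condExp_of_le hTX hX)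
  -- Claim 4
  have Claim4 : μ[ind A|mX] =ᵐ[μ] μ[ind A|mT] :=
    Claim1.symm.trans (Claim2.symm.trans Claim3.symm)
  -- Final assembly
  have hB0 : MeasurableSet[m0] B := hX B hB
  have hBsm : StronglyMeasurable[mX] (ind B) := stronglyMeasurable_const.indicator hB
  have hABint : Integrable (ind B * ind A) μ :=
    (intInd hA).bdd_mul ((hBsm.mono hX).aestronglyMeasurable)
      (Filter.Eventually.of_forall (ind_norm_le B))
  have step1 : μ[ind (A ∩ B)|mX] =ᵐ[μ] fun ω => ind B ω * (μ[ind A|mX]) ω := by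
    have h := condExp_mul_of_stronglyMeasurable_left (μ := μ) hBsm hABint (intInd hA)
    have e : ind (A ∩ B) = ind B * ind A := by
      rw [Set.inter_comm]
      funext ω
      simpa using congrFun (ind_inter B A) ω
    rw [e]; exact h
  have hGTsm : StronglyMeasurable[mT] (μ[ind A|mT]) := stronglyMeasurable_condExp
  have hGTB_int : Integrable (μ[ind A|mT] * ind B) μ :=
    (intInd hB0).bdd_mul ((hGTsm.mono hT).aestronglyMeasurable) (condexp_ind_bdd A)
  calc μ[ind (A ∩ B)|mT]
      =ᵐ[μ] μ[μ[ind (A ∩ B)|mX]|mT] := (condExp_condExp_of_le hTX hX).symm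
    _ =ᵐ[μ] μ[μ[ind A|mT] * ind B|mT] := condExp_congr_ae (step1.trans (by
        filter_upwards [Claim4] with ω hω
        simp only [Pi.mul_apply]
        rw [hω, mul_comm]))
    _ =ᵐ[μ] fun ω => (μ[ind A|mT]) ω * (μ[ind B|mT]) ω :=
        condExp_mul_of_stronglyMeasurable_left (μ := μ) hGTsm hGTB_int (intInd hB0)

end MarkovAux

/-- **Lemma 2.** If `θ − W − (X₁, X₂)` is a Markov chain and `T(X₁, X₂)` is sufficient for `W`
with respect to `(X₁, X₂)` (i.e., `W − T(X₁, X₂) − (X₁, X₂)` is a Markov chain), then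
`θ − T(X₁, X₂) − (X₁, X₂)` is a Markov chain, i.e., `T(X₁, X₂)` is sufficient for `θ`. -/
theorem sufficient_for_hidden_implies_sufficient
    {Ω Θ 𝒲 𝒳₁ 𝒳₂ 𝒯 : Type*}
    [MeasurableSpace Ω] [StandardBorelSpace Ω] [Nonempty Ω]
    [MeasurableSpace Θ] [StandardBorelSpace Θ]
    [MeasurableSpace 𝒲] [StandardBorelSpace 𝒲]
    [MeasurableSpace 𝒳₁] [StandardBorelSpace 𝒳₁]
    [MeasurableSpace 𝒳₂] [StandardBorelSpace 𝒳₂]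
    [MeasurableSpace 𝒯] [StandardBorelSpace 𝒯]
    (μ : Measure Ω) [IsProbabilityMeasure μ]
    (θ : Ω → Θ) (W : Ω → 𝒲) (X₁ : Ω → 𝒳₁) (X₂ : Ω → 𝒳₂) (T : 𝒳₁ × 𝒳₂ → 𝒯)
    (hθ : Measurable θ) (hW : Measurable W) (hX₁ : Measurable X₁) (hX₂ : Measurable X₂)
    (hT : Measurable T)
    -- θ and (X₁, X₂) are conditionally independent given W
    (hθW : CondIndepFun (MeasurableSpace.comap W inferInstance) hW.comap_le
      θ (fun ω => (X₁ ω, X₂ ω)) μ)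
    -- W and (X₁, X₂) are conditionally independent given T(X₁, X₂)
    (hWT : CondIndepFun
      (MeasurableSpace.comap (fun ω => T (X₁ ω, X₂ ω)) inferInstance)
      ((hT.comp (hX₁.prodMk hX₂)).comap_le)
      W (fun ω => (X₁ ω, X₂ ω)) μ) :
    -- θ and (X₁, X₂) are conditionally independent given T(X₁, X₂)
    CondIndepFun
      (MeasurableSpace.comap (fun ω => T (X₁ ω, X₂ ω)) inferInstance)
      ((hT.comp (hX₁.prodMk hX₂)).comap_le)
      θ (fun ω => (X₁ ω, X₂ ω)) μ := by
  have hX : Measurable fun ω => (X₁ ω, X₂ ω) := hX₁.prodMk hX₂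
  have hTXle : MeasurableSpace.comap (fun ω => T (X₁ ω, X₂ ω)) inferInstance ≤
      MeasurableSpace.comap (fun ω => (X₁ ω, X₂ ω)) inferInstance := by
    have : MeasurableSpace.comap (fun ω => T (X₁ ω, X₂ ω))
          (inferInstance : MeasurableSpace 𝒯)
        = MeasurableSpace.comap (fun ω => (X₁ ω, X₂ ω))
          (MeasurableSpace.comap T inferInstance) := by
      rw [MeasurableSpace.comap_comp]; rfl
    rw [this]
    exact MeasurableSpace.comap_mono hT.comap_le
  rw [condIndepFun_iff_condExp_inter_preimage_eq_mul hθ hX] at hθW ⊢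
  rw [condIndepFun_iff_condExp_inter_preimage_eq_mul hW hX] at hWT
  intro s t hs ht
  have goal := MarkovAux.markov_contraction (μ := μ)
    (hW := hW.comap_le) (hX := hX.comap_le) (hTX := hTXle) (hA := hθ hs)
    (h1 := fun u hu => by
      obtain ⟨t', ht', rfl⟩ := hu
      exact hθW s t' hs ht')
    (h2 := fun D u hD hu => by
      obtain ⟨c, hc, rfl⟩ := hD
      obtain ⟨t', ht', rfl⟩ := hu
      exact hWT c t' hc ht')
    (hB := (⟨t, ht, rfl⟩ : MeasurableSet[MeasurableSpace.comap (fun ω => (X₁ ω, X₂ ω)) inferInstance] ((fun ω => (X₁ ω, X₂ ω)) ⁻¹' t)))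
  exact goal
end

section
/- Theorem 2, part 1: Let θ, W, X1, X2 be random variables on a common probability space with standard Borel value spaces, let T be a measurable function of W, and let T1, T2 be measurable functions of X1 and X2 respectively. Suppose (i) θ and (X1, X2) are conditionally independent given W, (ii) θ and W are conditionally independent given T(W), and (iii) T(W) and (X1, X2) are conditionally independent given the pair (T1(X1), T2(X2)). Then θ and (X1, X2) are conditionally independent given (T1(X1), T2(X2)). -/
open MeasureTheory ProbabilityTheory

section Helpers

variable {Ω : Type*} {m m0 : MeasurableSpace Ω} {μ : Measure Ω}

lemma my_indInt [IsFiniteMeasure μ] {A : Set Ω} (hA : MeasurableSet A) :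
    Integrable (A.indicator fun _ => (1 : ℝ)) μ :=
  (integrable_const 1).indicator hA

lemma my_indBdd {A : Set Ω} :
    ∀ᵐ ω ∂μ, ‖A.indicator (fun _ => (1 : ℝ)) ω‖ ≤ 1 :=
  ae_of_all _ fun ω => by by_cases h : ω ∈ A <;> simp [h]

lemma my_ceBdd {A : Set Ω} :
    ∀ᵐ ω ∂μ, ‖(μ⟦A|m⟧) ω‖ ≤ 1 := by
  have h := ae_bdd_condExp_of_ae_bdd (m := m) (μ := μ) (R := 1)
    (f := A.indicator fun _ => (1 : ℝ))
    (ae_of_all _ fun ω => by by_cases h : ω ∈ A <;> simp [h])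
  simpa [Real.norm_eq_abs] using h

lemma my_int_mul_condexp [IsProbabilityMeasure μ] (hm : m ≤ m0) {g f : Ω → ℝ}
    (hg : StronglyMeasurable[m] g) (hgb : ∀ᵐ ω ∂μ, ‖g ω‖ ≤ 1) (hf : Integrable f μ) :
    ∫ ω, g ω * f ω ∂μ = ∫ ω, g ω * (μ[f|m]) ω ∂μ := by
  have h1 : Integrable (fun ω => g ω * f ω) μ :=
    hf.bdd_mul (hg.mono hm).aestronglyMeasurable hgb
  have h2 : μ[(fun ω => g ω * f ω)|m] =ᵐ[μ] fun ω => g ω * (μ[f|m]) ω :=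
    condExp_stronglyMeasurable_mul_of_bound hm hg hf 1 hgb
  calc ∫ ω, g ω * f ω ∂μ = ∫ ω, (μ[(fun ω => g ω * f ω)|m]) ω ∂μ :=
        (integral_condExp hm).symm
    _ = ∫ ω, g ω * (μ[f|m]) ω ∂μ := integral_congr_ae h2

lemma my_uniq [IsProbabilityMeasure μ] (hm : m ≤ m0) {f g : Ω → ℝ}
    (hf : Integrable f μ) (hg : Integrable g μ) (hgm : StronglyMeasurable[m] g)
    (heq : ∀ s, MeasurableSet[m] s → ∫ ω in s, g ω ∂μ = ∫ ω in s, f ω ∂μ) :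
    g =ᵐ[μ] μ[f|m] :=
  ae_eq_condExp_of_forall_setIntegral_eq hm hf (fun s _ _ => hg.integrableOn)
    (fun s hs _ => heq s hs) hgm.aestronglyMeasurable

lemma my_setIntegral_eq (f : Ω → ℝ) {u : Set Ω} (hu : MeasurableSet u) :
    ∫ ω in u, f ω ∂μ = ∫ ω, f ω * u.indicator (fun _ => (1 : ℝ)) ω ∂μ := by
  rw [← integral_indicator hu]
  exact integral_congr_ae (ae_of_all _ fun ω => by
    by_cases h : ω ∈ u <;> simp [Set.indicator_apply, h])

lemma my_ind_inter (A B : Set Ω) (ω : Ω) :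
    (A ∩ B).indicator (fun _ => (1 : ℝ)) ω
      = A.indicator (fun _ => (1 : ℝ)) ω * B.indicator (fun _ => (1 : ℝ)) ω := by
  by_cases h1 : ω ∈ A <;> by_cases h2 : ω ∈ B <;>
    simp [Set.indicator_apply, h1, h2]

lemma my_int_ind_inter {A u : Set Ω} (hu : MeasurableSet u) :
    ∫ ω, (A ∩ u).indicator (fun _ => (1 : ℝ)) ω ∂μ
      = ∫ ω in u, A.indicator (fun _ => (1 : ℝ)) ω ∂μ := by
  rw [my_setIntegral_eq _ hu]
  exact integral_congr_ae (ae_of_all _ fun ω => my_ind_inter A u ω)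

lemma my_int_prod [IsProbabilityMeasure μ] (hm : m ≤ m0) {A B : Set Ω}
    (hA : MeasurableSet A) (hB : MeasurableSet B)
    (h : (μ⟦A ∩ B|m⟧) =ᵐ[μ] fun ω => (μ⟦A|m⟧) ω * (μ⟦B|m⟧) ω) :
    ∫ ω, (μ⟦A|m⟧) ω * (μ⟦B|m⟧) ω ∂μ
      = ∫ ω, (A ∩ B).indicator (fun _ => (1 : ℝ)) ω ∂μ := by
  rw [← integral_congr_ae h, integral_condExp hm]

end Helpers

section Core

/-- Core argument with abstract sub-σ-algebras. -/
lemma my_core {Ω : Type*} {mΩ : MeasurableSpace Ω}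
    {μ : Measure Ω} [IsProbabilityMeasure μ]
    {mW mG mX mS : MeasurableSpace Ω}
    (hmW : mW ≤ mΩ) (hmG : mG ≤ mΩ) (hmX : mX ≤ mΩ) (hmS : mS ≤ mΩ)
    (hGW : mG ≤ mW) (hSX : mS ≤ mX)
    {A : Set Ω} (hA : MeasurableSet[mΩ] A)
    (hθW' : ∀ u, MeasurableSet[mX] u →
      (μ⟦A ∩ u|mW⟧) =ᵐ[μ] fun ω => (μ⟦A|mW⟧) ω * (μ⟦u|mW⟧) ω)
    (hθG' : ∀ u, MeasurableSet[mW] u →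
      (μ⟦A ∩ u|mG⟧) =ᵐ[μ] fun ω => (μ⟦A|mG⟧) ω * (μ⟦u|mG⟧) ω)
    (hGX' : ∀ u v, MeasurableSet[mG] u → MeasurableSet[mX] v →
      (μ⟦u ∩ v|mS⟧) =ᵐ[μ] fun ω => (μ⟦u|mS⟧) ω * (μ⟦v|mS⟧) ω)
    {B : Set Ω} (hBmX : MeasurableSet[mX] B) :
    (μ⟦A ∩ B|mS⟧) =ᵐ[μ] fun ω => (μ⟦A|mS⟧) ω * (μ⟦B|mS⟧) ω := by
  -- (E1): μ⟦A|mG⟧ = μ⟦A|mW⟧ a.e.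
  have hE1 : (μ⟦A|mG⟧) =ᵐ[μ] μ⟦A|mW⟧ := by
    refine my_uniq hmW (my_indInt hA) integrable_condExp
      (stronglyMeasurable_condExp.mono hGW) ?_
    intro u hu
    have huΩ : MeasurableSet[mΩ] u := hmW u hu
    calc ∫ ω in u, (μ⟦A|mG⟧) ω ∂μ
        = ∫ ω, (μ⟦A|mG⟧) ω * u.indicator (fun _ => (1:ℝ)) ω ∂μ :=
          my_setIntegral_eq _ huΩ
      _ = ∫ ω, (μ⟦A|mG⟧) ω * (μ⟦u|mG⟧) ω ∂μ :=
          my_int_mul_condexp hmG stronglyMeasurable_condExp my_ceBdd (my_indInt huΩ)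
      _ = ∫ ω, (A ∩ u).indicator (fun _ => (1:ℝ)) ω ∂μ :=
          my_int_prod hmG hA huΩ (hθG' u hu)
      _ = ∫ ω in u, A.indicator (fun _ => (1:ℝ)) ω ∂μ := my_int_ind_inter huΩ
  -- (F1)
  have hF1 : ∀ u, MeasurableSet[mX] u →
      ∫ ω in u, (μ⟦A|mG⟧) ω ∂μ = ∫ ω in u, A.indicator (fun _ => (1:ℝ)) ω ∂μ := by
    intro u hu
    have huΩ : MeasurableSet[mΩ] u := hmX u hu
    calc ∫ ω in u, (μ⟦A|mG⟧) ω ∂μ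
        = ∫ ω, (μ⟦A|mG⟧) ω * u.indicator (fun _ => (1:ℝ)) ω ∂μ :=
          my_setIntegral_eq _ huΩ
      _ = ∫ ω, (μ⟦A|mG⟧) ω * (μ⟦u|mW⟧) ω ∂μ :=
          my_int_mul_condexp hmW (stronglyMeasurable_condExp.mono hGW) my_ceBdd
            (my_indInt huΩ)
      _ = ∫ ω, (μ⟦A|mW⟧) ω * (μ⟦u|mW⟧) ω ∂μ :=
          integral_congr_ae (hE1.mul Filter.EventuallyEq.rfl)
      _ = ∫ ω, (A ∩ u).indicator (fun _ => (1:ℝ)) ω ∂μ :=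
          my_int_prod hmW hA huΩ (hθW' u hu)
      _ = ∫ ω in u, A.indicator (fun _ => (1:ℝ)) ω ∂μ := my_int_ind_inter huΩ
  -- (G1)
  have hG1 : ∀ u, MeasurableSet[mX] u →
      ∫ ω, (μ⟦A|mG⟧) ω * u.indicator (fun _ => (1:ℝ)) ω ∂μ
        = ∫ ω, (μ⟦A|mG⟧) ω * (μ⟦u|mS⟧) ω ∂μ := by
    intro u hu
    have huΩ : MeasurableSet[mΩ] u := hmX u hu
    have hQ : (μ[(μ⟦u|mS⟧)|mG]) =ᵐ[μ] μ⟦u|mG⟧ := by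
      refine my_uniq hmG (my_indInt huΩ) integrable_condExp stronglyMeasurable_condExp ?_
      intro v hv
      have hvΩ : MeasurableSet[mΩ] v := hmG v hv
      calc ∫ ω in v, (μ[(μ⟦u|mS⟧)|mG]) ω ∂μ
          = ∫ ω in v, (μ⟦u|mS⟧) ω ∂μ :=
            setIntegral_condExp hmG integrable_condExp hv
        _ = ∫ ω, (μ⟦u|mS⟧) ω * v.indicator (fun _ => (1:ℝ)) ω ∂μ :=
            my_setIntegral_eq _ hvΩ
        _ = ∫ ω, (μ⟦u|mS⟧) ω * (μ⟦v|mS⟧) ω ∂μ :=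
            my_int_mul_condexp hmS stronglyMeasurable_condExp my_ceBdd (my_indInt hvΩ)
        _ = ∫ ω, (μ⟦v|mS⟧) ω * (μ⟦u|mS⟧) ω ∂μ := by simp_rw [mul_comm]
        _ = ∫ ω, (v ∩ u).indicator (fun _ => (1:ℝ)) ω ∂μ :=
            my_int_prod hmS hvΩ huΩ (hGX' v u hv hu)
        _ = ∫ ω in v, u.indicator (fun _ => (1:ℝ)) ω ∂μ := by
            rw [Set.inter_comm, my_int_ind_inter hvΩ]
    calc ∫ ω, (μ⟦A|mG⟧) ω * u.indicator (fun _ => (1:ℝ)) ω ∂μ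
        = ∫ ω, (μ⟦A|mG⟧) ω * (μ⟦u|mG⟧) ω ∂μ :=
          my_int_mul_condexp hmG stronglyMeasurable_condExp my_ceBdd (my_indInt huΩ)
      _ = ∫ ω, (μ⟦A|mG⟧) ω * (μ[(μ⟦u|mS⟧)|mG]) ω ∂μ :=
          integral_congr_ae (Filter.EventuallyEq.rfl.mul hQ.symm)
      _ = ∫ ω, (μ⟦A|mG⟧) ω * (μ⟦u|mS⟧) ω ∂μ :=
          (my_int_mul_condexp hmG stronglyMeasurable_condExp my_ceBdd
            integrable_condExp).symm
  -- (Y1)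
  have hY1 : (μ[(μ⟦A|mG⟧)|mS]) =ᵐ[μ] μ⟦A|mS⟧ := by
    refine my_uniq hmS (my_indInt hA) integrable_condExp stronglyMeasurable_condExp ?_
    intro u hu
    calc ∫ ω in u, (μ[(μ⟦A|mG⟧)|mS]) ω ∂μ
        = ∫ ω in u, (μ⟦A|mG⟧) ω ∂μ := setIntegral_condExp hmS integrable_condExp hu
      _ = ∫ ω in u, A.indicator (fun _ => (1:ℝ)) ω ∂μ := hF1 u (hSX u hu)
  -- (KEY)
  have hKEY : (μ⟦A|mS⟧) =ᵐ[μ] μ⟦A|mX⟧ := by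
    refine my_uniq hmX (my_indInt hA) integrable_condExp
      (stronglyMeasurable_condExp.mono hSX) ?_
    intro u hu
    have huΩ : MeasurableSet[mΩ] u := hmX u hu
    calc ∫ ω in u, (μ⟦A|mS⟧) ω ∂μ
        = ∫ ω, (μ⟦A|mS⟧) ω * u.indicator (fun _ => (1:ℝ)) ω ∂μ :=
          my_setIntegral_eq _ huΩ
      _ = ∫ ω, (μ⟦A|mS⟧) ω * (μ⟦u|mS⟧) ω ∂μ :=
          my_int_mul_condexp hmS stronglyMeasurable_condExp my_ceBdd (my_indInt huΩ)
      _ = ∫ ω, (μ[(μ⟦A|mG⟧)|mS]) ω * (μ⟦u|mS⟧) ω ∂μ :=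
          integral_congr_ae (hY1.symm.mul Filter.EventuallyEq.rfl)
      _ = ∫ ω, (μ⟦u|mS⟧) ω * (μ[(μ⟦A|mG⟧)|mS]) ω ∂μ := by simp_rw [mul_comm]
      _ = ∫ ω, (μ⟦u|mS⟧) ω * (μ⟦A|mG⟧) ω ∂μ :=
          (my_int_mul_condexp hmS stronglyMeasurable_condExp my_ceBdd
            integrable_condExp).symm
      _ = ∫ ω, (μ⟦A|mG⟧) ω * (μ⟦u|mS⟧) ω ∂μ := by simp_rw [mul_comm]
      _ = ∫ ω, (μ⟦A|mG⟧) ω * u.indicator (fun _ => (1:ℝ)) ω ∂μ := (hG1 u hu).symm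
      _ = ∫ ω in u, (μ⟦A|mG⟧) ω ∂μ := (my_setIntegral_eq _ huΩ).symm
      _ = ∫ ω in u, A.indicator (fun _ => (1:ℝ)) ω ∂μ := hF1 u hu
  -- Final assembly
  have hB : MeasurableSet[mΩ] B := hmX B hBmX
  have hindB : StronglyMeasurable[mX] (B.indicator (fun _ => (1:ℝ))) :=
    stronglyMeasurable_const.indicator hBmX
  have c0 : (μ⟦A ∩ B|mX⟧) =ᵐ[μ]
      μ[(B.indicator (fun _ => (1:ℝ)) * A.indicator (fun _ => (1:ℝ)))|mX] := by
    refine condExp_congr_ae (Filter.EventuallyEq.of_eq (funext fun ω => ?_))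
    rw [Pi.mul_apply, my_ind_inter A B ω, mul_comm]
  have c1 : (μ[(B.indicator (fun _ => (1:ℝ)) * A.indicator (fun _ => (1:ℝ)))|mX])
      =ᵐ[μ] B.indicator (fun _ => (1:ℝ)) * μ⟦A|mX⟧ :=
    condExp_stronglyMeasurable_mul_of_bound hmX hindB (my_indInt hA) 1 my_indBdd
  have c1' : (B.indicator (fun _ => (1:ℝ)) * μ⟦A|mX⟧) =ᵐ[μ]
      (μ⟦A|mS⟧) * B.indicator (fun _ => (1:ℝ)) :=
    hKEY.symm.mono fun ω h => by
      rw [Pi.mul_apply, Pi.mul_apply, h, mul_comm]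
  have c2 : (μ⟦A ∩ B|mS⟧) =ᵐ[μ]
      μ[((μ⟦A|mS⟧) * B.indicator (fun _ => (1:ℝ)))|mS] :=
    ((condExp_condExp_of_le hSX hmX).symm).trans
      (condExp_congr_ae (c0.trans (c1.trans c1')))
  have c3 : (μ[((μ⟦A|mS⟧) * B.indicator (fun _ => (1:ℝ)))|mS]) =ᵐ[μ]
      (μ⟦A|mS⟧) * μ⟦B|mS⟧ :=
    condExp_stronglyMeasurable_mul_of_bound hmS stronglyMeasurable_condExp
      (my_indInt hB) 1 my_ceBdd
  exact (c2.trans c3).trans (Filter.EventuallyEq.of_eq rfl)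

end Core

section AuxMain

lemma my_aux_main {Ω Θ' 𝒲 𝒢 𝒳 𝒮 : Type*}
    [MeasurableSpace Ω] [StandardBorelSpace Ω] [Nonempty Ω]
    [MeasurableSpace Θ'] [MeasurableSpace 𝒲] [MeasurableSpace 𝒢]
    [MeasurableSpace 𝒳] [MeasurableSpace 𝒮]
    (μ : Measure Ω) [IsProbabilityMeasure μ]
    {θ : Ω → Θ'} {W : Ω → 𝒲} {G : Ω → 𝒢} {X : Ω → 𝒳} {S : Ω → 𝒮}
    (hθ : Measurable θ) (hW : Measurable W) (hG : Measurable G)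
    (hX : Measurable X) (hS : Measurable S)
    (hGW : MeasurableSpace.comap G inferInstance ≤ MeasurableSpace.comap W inferInstance)
    (hSX : MeasurableSpace.comap S inferInstance ≤ MeasurableSpace.comap X inferInstance)
    (hθW : CondIndepFun (MeasurableSpace.comap W inferInstance) hW.comap_le θ X μ)
    (hθG : CondIndepFun (MeasurableSpace.comap G inferInstance) hG.comap_le θ W μ)
    (hGX : CondIndepFun (MeasurableSpace.comap S inferInstance) hS.comap_le G X μ) :
    CondIndepFun (MeasurableSpace.comap S inferInstance) hS.comap_le θ X μ := by
  have hθW' := (condIndepFun_iff_condExp_inter_preimage_eq_mul hθ hX).mp hθW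
  have hθG' := (condIndepFun_iff_condExp_inter_preimage_eq_mul hθ hW).mp hθG
  have hGX' := (condIndepFun_iff_condExp_inter_preimage_eq_mul hG hX).mp hGX
  rw [condIndepFun_iff_condExp_inter_preimage_eq_mul hθ hX]
  intro s t hs ht
  refine my_core (mW := MeasurableSpace.comap W inferInstance)
    (mG := MeasurableSpace.comap G inferInstance)
    (mX := MeasurableSpace.comap X inferInstance)
    hW.comap_le hG.comap_le hX.comap_le hS.comap_le hGW hSX (hθ hs)
    ?_ ?_ ?_ ⟨t, ht, rfl⟩
  · rintro u ⟨t', ht', rfl⟩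
    exact hθW' s t' hs ht'
  · rintro u ⟨d, hd, rfl⟩
    exact hθG' s d hs hd
  · rintro u v ⟨c, hc, rfl⟩ ⟨t', ht', rfl⟩
    exact hGX' c t' hc ht'

end AuxMain

/-- **Theorem 2, part 1.** Suppose (i) `θ − W − (X₁, X₂)`, (ii) `θ − T(W) − W`, and
(iii) `T(W) − (T₁(X₁), T₂(X₂)) − (X₁, X₂)` are Markov chains. Then
`θ − (T₁(X₁), T₂(X₂)) − (X₁, X₂)` is a Markov chain, i.e., `(T₁(X₁), T₂(X₂))` is globally
sufficient for `θ`. -/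
theorem globally_sufficient_of_sufficient_for_statistic_of_hidden
    {Ω Θ 𝒲 𝒯W 𝒳₁ 𝒳₂ 𝒯₁ 𝒯₂ : Type*}
    [MeasurableSpace Ω] [StandardBorelSpace Ω] [Nonempty Ω]
    [MeasurableSpace Θ] [StandardBorelSpace Θ]
    [MeasurableSpace 𝒲] [StandardBorelSpace 𝒲]
    [MeasurableSpace 𝒯W] [StandardBorelSpace 𝒯W]
    [MeasurableSpace 𝒳₁] [StandardBorelSpace 𝒳₁]
    [MeasurableSpace 𝒳₂] [StandardBorelSpace 𝒳₂]
    [MeasurableSpace 𝒯₁] [StandardBorelSpace 𝒯₁]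
    [MeasurableSpace 𝒯₂] [StandardBorelSpace 𝒯₂]
    (μ : Measure Ω) [IsProbabilityMeasure μ]
    (θ : Ω → Θ) (W : Ω → 𝒲) (X₁ : Ω → 𝒳₁) (X₂ : Ω → 𝒳₂)
    (T : 𝒲 → 𝒯W) (T₁ : 𝒳₁ → 𝒯₁) (T₂ : 𝒳₂ → 𝒯₂)
    (hθ : Measurable θ) (hW : Measurable W) (hX₁ : Measurable X₁) (hX₂ : Measurable X₂)
    (hT : Measurable T) (hT₁ : Measurable T₁) (hT₂ : Measurable T₂)
    -- (i) θ and (X₁, X₂) are conditionally independent given W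
    (hθW : CondIndepFun (MeasurableSpace.comap W inferInstance) hW.comap_le
      θ (fun ω => (X₁ ω, X₂ ω)) μ)
    -- (ii) θ and W are conditionally independent given T(W)
    (hθT : CondIndepFun (MeasurableSpace.comap (fun ω => T (W ω)) inferInstance)
      ((hT.comp hW).comap_le) θ W μ)
    -- (iii) T(W) and (X₁, X₂) are conditionally independent given (T₁(X₁), T₂(X₂))
    (hTX : CondIndepFun
      (MeasurableSpace.comap (fun ω => (T₁ (X₁ ω), T₂ (X₂ ω))) inferInstance)
      (((hT₁.comp hX₁).prodMk (hT₂.comp hX₂)).comap_le)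
      (fun ω => T (W ω)) (fun ω => (X₁ ω, X₂ ω)) μ) :
    -- θ and (X₁, X₂) are conditionally independent given (T₁(X₁), T₂(X₂))
    CondIndepFun
      (MeasurableSpace.comap (fun ω => (T₁ (X₁ ω), T₂ (X₂ ω))) inferInstance)
      (((hT₁.comp hX₁).prodMk (hT₂.comp hX₂)).comap_le)
      θ (fun ω => (X₁ ω, X₂ ω)) μ := by
  have hGW : MeasurableSpace.comap (fun ω => T (W ω)) inferInstance
      ≤ MeasurableSpace.comap W inferInstance := by
    rintro u ⟨c, hc, rfl⟩
    exact ⟨T ⁻¹' c, hT hc, rfl⟩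
  have hSX : MeasurableSpace.comap (fun ω => (T₁ (X₁ ω), T₂ (X₂ ω))) inferInstance
      ≤ MeasurableSpace.comap (fun ω => (X₁ ω, X₂ ω)) inferInstance := by
    rintro u ⟨c, hc, rfl⟩
    exact ⟨Prod.map T₁ T₂ ⁻¹' c, (hT₁.prodMap hT₂) hc, rfl⟩
  exact my_aux_main μ hθ hW (hT.comp hW) (hX₁.prodMk hX₂)
    ((hT₁.comp hX₁).prodMk (hT₂.comp hX₂)) hGW hSX hθW hθT hTX
end

section
/- Corollary 1 (HCI model: local sufficiency with respect to the hidden variable implies global sufficiency): Let θ, W, X1, X2 be random variables taking values in finite sets satisfying the HCI conditions: X1 and X2 are conditionally independent given W, and θ and (X1, X2) are conditionally independent given W. If for i = 1, 2 the statistic Ti(Xi) is locally sufficient for W, i.e., W and Xi are conditionally independent given Ti(Xi), then θ and (X1, X2) are conditionally independent given the pair (T1(X1), T2(X2)). -/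
open MeasureTheory ProbabilityTheory

set_option linter.unusedSectionVars false
set_option maxHeartbeats 1000000

lemma div_eq_div_mul_div_iff {a b d c : ℝ} (hc : c ≠ 0) :
    a / c = b / c * (d / c) ↔ a * c = b * d := by
  rw [div_mul_div_comm, div_eq_div_iff hc (mul_ne_zero hc hc)]
  constructor
  · intro h; apply mul_right_cancel₀ hc; linear_combination h
  · intro h; linear_combination c * h


section Helpers

section Helpers

variable {Ω 𝒵 : Type*} {mΩ : MeasurableSpace Ω} [MeasurableSpace 𝒵]
  [Fintype 𝒵] [MeasurableSingletonClass 𝒵]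
  {μ : Measure Ω} [IsFiniteMeasure μ] {Z : Ω → 𝒵}


lemma ae_eq_comp_discrete_iff {F G : 𝒵 → ℝ} :
    ((fun ω => F (Z ω)) =ᵐ[μ] fun ω => G (Z ω)) ↔ ∀ z, μ (Z ⁻¹' {z}) ≠ 0 → F z = G z := by
  classical
  constructor
  · intro h z hz
    by_contra hne
    refine hz (measure_mono_null (fun ω hω => ?_) (ae_iff.mp h))
    have hω' : Z ω = z := hω
    simp [Set.mem_setOf_eq, hω', hne]
  · intro h
    rw [Filter.EventuallyEq, ae_iff]
    have hnull : μ (⋃ z ∈ {z : 𝒵 | F z ≠ G z}, Z ⁻¹' {z}) = 0 := by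
      rw [measure_biUnion_null_iff (Set.to_countable {z : 𝒵 | F z ≠ G z})]
      intro z hz
      by_contra h0
      exact hz (h z h0)
    refine measure_mono_null (fun ω hω => ?_) hnull
    exact Set.mem_biUnion (show Z ω ∈ {z : 𝒵 | F z ≠ G z} from hω) rfl

lemma sum_measure_fiber_inter (hZ : Measurable Z) (E : Set Ω) :
    ∑ z : 𝒵, μ (Z ⁻¹' {z} ∩ E) = μ E := by
  have h : ∀ z : 𝒵, μ (Z ⁻¹' {z} ∩ E) = μ.restrict E (Z ⁻¹' {z}) := by
    intro z
    rw [Measure.restrict_apply (hZ (measurableSet_singleton z))]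
  simp_rw [h]
  rw [sum_measure_preimage_singleton]
  · simp
  · exact fun y _ => hZ (measurableSet_singleton y)


lemma condexp_comap_discrete (hZ : Measurable Z) {A : Set Ω} (hA : MeasurableSet A) :
    (μ⟦A | MeasurableSpace.comap Z inferInstance⟧) =ᵐ[μ]
      fun ω => (μ (A ∩ Z ⁻¹' {Z ω})).toReal / (μ (Z ⁻¹' {Z ω})).toReal := by
  classical
  set F : 𝒵 → ℝ := fun z => (μ (A ∩ Z ⁻¹' {z})).toReal / (μ (Z ⁻¹' {z})).toReal with hF
  have hgrepr : (fun ω => F (Z ω))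
      = fun ω => ∑ z : 𝒵, (Z ⁻¹' {z}).indicator (fun _ => F z) ω := by
    funext ω
    rw [Finset.sum_eq_single (Z ω)]
    · simp [Set.indicator_apply]
    · intro z _ hz
      simp [Set.indicator_apply, Set.mem_preimage, hz.symm]
    · simp
  have hgint : Integrable (fun ω => F (Z ω)) μ := by
    rw [hgrepr]
    exact integrable_finset_sum _ fun z _ =>
      (integrable_const (F z)).indicator (hZ (measurableSet_singleton z))
  refine (ae_eq_condExp_of_forall_setIntegral_eq hZ.comap_le
    ((integrable_const (1:ℝ)).indicator hA) (fun s _ _ => hgint.integrableOn)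
    (fun s hs _ => ?_) ?_).symm
  · obtain ⟨u, -, rfl⟩ := hs
    have key : ∀ z : 𝒵, F z * (μ (Z ⁻¹' u ∩ Z ⁻¹' {z})).toReal
        = (μ (Z ⁻¹' {z} ∩ (A ∩ Z ⁻¹' u))).toReal := by
      intro z
      by_cases hzu : z ∈ u
      · have h1 : Z ⁻¹' u ∩ Z ⁻¹' {z} = Z ⁻¹' {z} := by
          ext ω; simp only [Set.mem_inter_iff, Set.mem_preimage, Set.mem_singleton_iff]
          exact ⟨fun h => h.2, fun h => ⟨h ▸ hzu, h⟩⟩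
        have h2 : Z ⁻¹' {z} ∩ (A ∩ Z ⁻¹' u) = A ∩ Z ⁻¹' {z} := by
          ext ω; simp only [Set.mem_inter_iff, Set.mem_preimage, Set.mem_singleton_iff]
          exact ⟨fun h => ⟨h.2.1, h.1⟩, fun h => ⟨h.2, h.1, h.2 ▸ hzu⟩⟩
        rw [h1, h2, hF]
        by_cases h0 : μ (Z ⁻¹' {z}) = 0
        · have : μ (A ∩ Z ⁻¹' {z}) = 0 :=
            measure_mono_null Set.inter_subset_right h0
          simp [h0, this]
        · rw [div_mul_cancel₀]
          exact ENNReal.toReal_ne_zero.mpr ⟨h0, measure_ne_top μ _⟩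
      · have h1 : Z ⁻¹' u ∩ Z ⁻¹' {z} = ∅ := by
          ext ω
          simp only [Set.mem_inter_iff, Set.mem_preimage, Set.mem_singleton_iff,
            Set.mem_empty_iff_false, iff_false]
          rintro ⟨h, rfl⟩; exact hzu h
        have h2 : Z ⁻¹' {z} ∩ (A ∩ Z ⁻¹' u) = ∅ := by
          ext ω
          simp only [Set.mem_inter_iff, Set.mem_preimage, Set.mem_singleton_iff,
            Set.mem_empty_iff_false, iff_false]
          rintro ⟨rfl, -, hu⟩; exact hzu hu
        simp [h1, h2]
    calc ∫ ω in Z ⁻¹' u, F (Z ω) ∂μ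
        = ∑ z : 𝒵, ∫ ω in Z ⁻¹' u, (Z ⁻¹' {z}).indicator (fun _ => F z) ω ∂μ := by
          rw [hgrepr]
          exact integral_finset_sum _ fun z _ =>
            (((integrable_const (F z)).indicator (hZ (measurableSet_singleton z)))).integrableOn
      _ = ∑ z : 𝒵, F z * (μ (Z ⁻¹' u ∩ Z ⁻¹' {z})).toReal := by
          refine Finset.sum_congr rfl fun z _ => ?_
          rw [setIntegral_indicator (hZ (measurableSet_singleton z)), setIntegral_const,
            smul_eq_mul, mul_comm, measureReal_def]
      _ = ∑ z : 𝒵, (μ (Z ⁻¹' {z} ∩ (A ∩ Z ⁻¹' u))).toReal := by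
          exact Finset.sum_congr rfl fun z _ => key z
      _ = (μ (A ∩ Z ⁻¹' u)).toReal := by
          rw [← ENNReal.toReal_sum (fun z _ => measure_ne_top μ _),
            sum_measure_fiber_inter hZ]
      _ = ∫ ω in Z ⁻¹' u, A.indicator (fun _ => (1:ℝ)) ω ∂μ := by
          rw [setIntegral_indicator hA, setIntegral_const, smul_eq_mul, mul_one,
            Set.inter_comm, measureReal_def]
  · refine StronglyMeasurable.aestronglyMeasurable ?_
    refine Measurable.stronglyMeasurable ?_
    exact (measurable_of_countable F).comp (Measurable.of_comap_le le_rfl)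


variable [StandardBorelSpace Ω] [Nonempty Ω]


lemma condIndepFun_comap_discrete_iff {β γ : Type*} [MeasurableSpace β] [MeasurableSpace γ]
    (hZ : Measurable Z) {f : Ω → β} {g : Ω → γ} (hf : Measurable f) (hg : Measurable g) :
    CondIndepFun (MeasurableSpace.comap Z inferInstance) hZ.comap_le f g μ ↔
      ∀ (s : Set β) (t : Set γ), MeasurableSet s → MeasurableSet t → ∀ z : 𝒵,
        (μ (f ⁻¹' s ∩ g ⁻¹' t ∩ Z ⁻¹' {z})).toReal * (μ (Z ⁻¹' {z})).toReal
          = (μ (f ⁻¹' s ∩ Z ⁻¹' {z})).toReal * (μ (g ⁻¹' t ∩ Z ⁻¹' {z})).toReal := by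
  rw [condIndepFun_iff_condExp_inter_preimage_eq_mul hf hg]
  constructor
  · intro h s t hs ht z
    have e1 := condexp_comap_discrete (μ := μ) hZ ((hf hs).inter (hg ht))
    have e2 := condexp_comap_discrete (μ := μ) hZ (hf hs)
    have e3 := condexp_comap_discrete (μ := μ) hZ (hg ht)
    have hae : (fun ω => (μ (f ⁻¹' s ∩ g ⁻¹' t ∩ Z ⁻¹' {Z ω})).toReal
          / (μ (Z ⁻¹' {Z ω})).toReal)
        =ᵐ[μ] fun ω => (μ (f ⁻¹' s ∩ Z ⁻¹' {Z ω})).toReal / (μ (Z ⁻¹' {Z ω})).toReal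
          * ((μ (g ⁻¹' t ∩ Z ⁻¹' {Z ω})).toReal / (μ (Z ⁻¹' {Z ω})).toReal) :=
      (e1.symm.trans (h s t hs ht)).trans (e2.mul e3)
    have hpt := (ae_eq_comp_discrete_iff
      (F := fun z => (μ (f ⁻¹' s ∩ g ⁻¹' t ∩ Z ⁻¹' {z})).toReal / (μ (Z ⁻¹' {z})).toReal)
      (G := fun z => (μ (f ⁻¹' s ∩ Z ⁻¹' {z})).toReal / (μ (Z ⁻¹' {z})).toReal
        * ((μ (g ⁻¹' t ∩ Z ⁻¹' {z})).toReal / (μ (Z ⁻¹' {z})).toReal))).mp hae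
    by_cases h0 : μ (Z ⁻¹' {z}) = 0
    · have l1 : μ (f ⁻¹' s ∩ g ⁻¹' t ∩ Z ⁻¹' {z}) = 0 :=
        measure_mono_null Set.inter_subset_right h0
      have l2 : μ (f ⁻¹' s ∩ Z ⁻¹' {z}) = 0 := measure_mono_null Set.inter_subset_right h0
      simp [l1, l2]
    · exact (div_eq_div_mul_div_iff
        (ENNReal.toReal_ne_zero.mpr ⟨h0, measure_ne_top μ _⟩)).mp (hpt z h0)
  · intro h s t hs ht
    have e1 := condexp_comap_discrete (μ := μ) hZ ((hf hs).inter (hg ht))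
    have e2 := condexp_comap_discrete (μ := μ) hZ (hf hs)
    have e3 := condexp_comap_discrete (μ := μ) hZ (hg ht)
    refine e1.trans (Filter.EventuallyEq.trans ?_ (e2.mul e3).symm)
    refine (ae_eq_comp_discrete_iff
      (F := fun z => (μ (f ⁻¹' s ∩ g ⁻¹' t ∩ Z ⁻¹' {z})).toReal / (μ (Z ⁻¹' {z})).toReal)
      (G := fun z => (μ (f ⁻¹' s ∩ Z ⁻¹' {z})).toReal / (μ (Z ⁻¹' {z})).toReal
        * ((μ (g ⁻¹' t ∩ Z ⁻¹' {z})).toReal / (μ (Z ⁻¹' {z})).toReal))).mpr ?_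
    intro z hz
    exact (div_eq_div_mul_div_iff
      (ENNReal.toReal_ne_zero.mpr ⟨hz, measure_ne_top μ _⟩)).mpr (h s t hs ht z)


end Helpers

/-- **Corollary 1 (HCI model).** Suppose `X₁` and `X₂` are conditionally independent given the
hidden variable `W`, and `θ` and `(X₁, X₂)` are conditionally independent given `W`. If for
`i = 1, 2` the statistic `Tᵢ(Xᵢ)` is locally sufficient for `W` (i.e., `W` and `Xᵢ` are
conditionally independent given `Tᵢ(Xᵢ)`), then `θ` and `(X₁, X₂)` are conditionally
independent given `(T₁(X₁), T₂(X₂))`. -/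
theorem hci_local_sufficiency_implies_global_sufficiency
    {Ω Θ 𝒲 𝒳₁ 𝒳₂ 𝒯₁ 𝒯₂ : Type*}
    [MeasurableSpace Ω] [StandardBorelSpace Ω] [Nonempty Ω] [Fintype Ω]
    [Fintype Θ] [MeasurableSpace Θ] [MeasurableSingletonClass Θ]
    [Fintype 𝒲] [MeasurableSpace 𝒲] [MeasurableSingletonClass 𝒲]
    [Fintype 𝒳₁] [MeasurableSpace 𝒳₁] [MeasurableSingletonClass 𝒳₁]
    [Fintype 𝒳₂] [MeasurableSpace 𝒳₂] [MeasurableSingletonClass 𝒳₂]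
    [Fintype 𝒯₁] [MeasurableSpace 𝒯₁] [MeasurableSingletonClass 𝒯₁]
    [Fintype 𝒯₂] [MeasurableSpace 𝒯₂] [MeasurableSingletonClass 𝒯₂]
    (μ : Measure Ω) [IsProbabilityMeasure μ]
    (θ : Ω → Θ) (W : Ω → 𝒲) (X₁ : Ω → 𝒳₁) (X₂ : Ω → 𝒳₂)
    (T₁ : 𝒳₁ → 𝒯₁) (T₂ : 𝒳₂ → 𝒯₂)
    (hθ : Measurable θ) (hW : Measurable W) (hX₁ : Measurable X₁) (hX₂ : Measurable X₂)
    (hT₁ : Measurable T₁) (hT₂ : Measurable T₂)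
    -- HCI: X₁ and X₂ are conditionally independent given W
    (hci : CondIndepFun (MeasurableSpace.comap W inferInstance) hW.comap_le X₁ X₂ μ)
    -- HCI: θ and (X₁, X₂) are conditionally independent given W
    (hθW : CondIndepFun (MeasurableSpace.comap W inferInstance) hW.comap_le
      θ (fun ω => (X₁ ω, X₂ ω)) μ)
    -- Tᵢ(Xᵢ) is locally sufficient for W, i = 1, 2
    (hloc₁ : CondIndepFun (MeasurableSpace.comap (fun ω => T₁ (X₁ ω)) inferInstance)
      ((hT₁.comp hX₁).comap_le) W X₁ μ)
    (hloc₂ : CondIndepFun (MeasurableSpace.comap (fun ω => T₂ (X₂ ω)) inferInstance)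
      ((hT₂.comp hX₂).comap_le) W X₂ μ) :
    -- θ and (X₁, X₂) are conditionally independent given (T₁(X₁), T₂(X₂))
    CondIndepFun
      (MeasurableSpace.comap (fun ω => (T₁ (X₁ ω), T₂ (X₂ ω))) inferInstance)
      (((hT₁.comp hX₁).prodMk (hT₂.comp hX₂)).comap_le)
      θ (fun ω => (X₁ ω, X₂ ω)) μ := by
  classical
  have hpair : Measurable (fun ω => (X₁ ω, X₂ ω)) := hX₁.prodMk hX₂
  have hZ : Measurable (fun ω => (T₁ (X₁ ω), T₂ (X₂ ω))) :=
    (hT₁.comp hX₁).prodMk (hT₂.comp hX₂)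
  -- extract pointwise facts from the hypotheses
  have E1 := (condIndepFun_comap_discrete_iff hW hX₁ hX₂).mp hci
  have E2 := (condIndepFun_comap_discrete_iff hW hθ hpair).mp hθW
  have E3 := (condIndepFun_comap_discrete_iff (hT₁.comp hX₁) hW hX₁).mp hloc₁
  have E4 := (condIndepFun_comap_discrete_iff (hT₂.comp hX₂) hW hX₂).mp hloc₂
  refine (condIndepFun_comap_discrete_iff hZ hθ hpair).mpr ?_
  rintro s t hs ht ⟨t₁, t₂⟩
  set P : Set Ω → ℝ := fun E => (μ E).toReal with hP
  set A : Set Ω := θ ⁻¹' s with hA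
  set D₁ : Set Ω := (fun ω => T₁ (X₁ ω)) ⁻¹' {t₁} with hD₁
  set D₂ : Set Ω := (fun ω => T₂ (X₂ ω)) ⁻¹' {t₂} with hD₂
  have hmD₁ : MeasurableSet D₁ := (hT₁.comp hX₁) (measurableSet_singleton t₁)
  have hmD₂ : MeasurableSet D₂ := (hT₂.comp hX₂) (measurableSet_singleton t₂)
  have hZD : (fun ω => (T₁ (X₁ ω), T₂ (X₂ ω))) ⁻¹' {(t₁, t₂)} = D₁ ∩ D₂ := by
    ext ω
    simp [hD₁, hD₂, Prod.ext_iff]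
  rw [hZD]
  -- fiber decomposition helpers
  have Pfib : ∀ E : Set Ω, P E = ∑ w : 𝒲, P (E ∩ W ⁻¹' {w}) := by
    intro E
    rw [hP]
    simp only
    rw [← ENNReal.toReal_sum (fun _ _ => measure_ne_top μ _)]
    congr 1
    simp_rw [Set.inter_comm E]
    exact (sum_measure_fiber_inter hW E).symm
  have Pfib2 : ∀ E : Set Ω,
      P E = ∑ x : 𝒳₁ × 𝒳₂, P ((fun ω => (X₁ ω, X₂ ω)) ⁻¹' {x} ∩ E) := by
    intro E
    rw [hP]
    simp only
    rw [← ENNReal.toReal_sum (fun _ _ => measure_ne_top μ _)]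
    congr 1
    exact (sum_measure_fiber_inter hpair E).symm
  -- the core singleton identity
  have core : ∀ (x₁ : 𝒳₁) (x₂ : 𝒳₂),
      P (A ∩ (X₁ ⁻¹' {x₁} ∩ X₂ ⁻¹' {x₂}) ∩ (D₁ ∩ D₂)) * P (D₁ ∩ D₂)
        = P (A ∩ (D₁ ∩ D₂)) * P (X₁ ⁻¹' {x₁} ∩ X₂ ⁻¹' {x₂} ∩ (D₁ ∩ D₂)) := by
    intro x₁ x₂
    set B₁ : Set Ω := X₁ ⁻¹' {x₁} with hB₁
    set B₂ : Set Ω := X₂ ⁻¹' {x₂} with hB₂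
    have Pz : ∀ E F : Set Ω, E ⊆ F → μ F = 0 → P E = 0 := by
      intro E F hEF hF
      rw [hP]; simp only
      rw [measure_mono_null hEF hF]
      simp
    by_cases ht1 : T₁ x₁ = t₁
    · by_cases ht2 : T₂ x₂ = t₂
      · -- main case
        have hB₁D₁ : B₁ ⊆ D₁ := by
          intro ω hω
          have : X₁ ω = x₁ := hω
          simp [hD₁, this, ht1]
        have hB₂D₂ : B₂ ⊆ D₂ := by
          intro ω hω
          have : X₂ ω = x₂ := hω
          simp [hD₂, this, ht2]
        -- per-w facts
        have key1 : ∀ w : 𝒲, P (B₁ ∩ B₂ ∩ W ⁻¹' {w}) * P (W ⁻¹' {w})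
            = P (B₁ ∩ W ⁻¹' {w}) * P (B₂ ∩ W ⁻¹' {w}) :=
          fun w => E1 {x₁} {x₂} (measurableSet_singleton _) (measurableSet_singleton _) w
        have key2 : ∀ w : 𝒲, P (D₁ ∩ D₂ ∩ W ⁻¹' {w}) * P (W ⁻¹' {w})
            = P (D₁ ∩ W ⁻¹' {w}) * P (D₂ ∩ W ⁻¹' {w}) :=
          fun w => E1 (T₁ ⁻¹' {t₁}) (T₂ ⁻¹' {t₂}) (hT₁ (measurableSet_singleton _))
            (hT₂ (measurableSet_singleton _)) w
        have key3 : ∀ w : 𝒲, P (A ∩ (B₁ ∩ B₂) ∩ W ⁻¹' {w}) * P (W ⁻¹' {w})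
            = P (A ∩ W ⁻¹' {w}) * P (B₁ ∩ B₂ ∩ W ⁻¹' {w}) :=
          fun w => E2 s (({x₁} : Set 𝒳₁) ×ˢ ({x₂} : Set 𝒳₂)) hs
            ((measurableSet_singleton x₁).prod (measurableSet_singleton x₂)) w
        have key4 : ∀ w : 𝒲, P (A ∩ (D₁ ∩ D₂) ∩ W ⁻¹' {w}) * P (W ⁻¹' {w})
            = P (A ∩ W ⁻¹' {w}) * P (D₁ ∩ D₂ ∩ W ⁻¹' {w}) :=
          fun w => E2 s ((T₁ ⁻¹' {t₁} : Set 𝒳₁) ×ˢ (T₂ ⁻¹' {t₂} : Set 𝒳₂)) hs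
            ((hT₁ (measurableSet_singleton _)).prod (hT₂ (measurableSet_singleton _))) w
        have key5 : ∀ w : 𝒲, P (W ⁻¹' {w} ∩ B₁ ∩ D₁) * P D₁
            = P (W ⁻¹' {w} ∩ D₁) * P (B₁ ∩ D₁) :=
          fun w => E3 {w} {x₁} (measurableSet_singleton _) (measurableSet_singleton _) t₁
        have key6 : ∀ w : 𝒲, P (W ⁻¹' {w} ∩ B₂ ∩ D₂) * P D₂
            = P (W ⁻¹' {w} ∩ D₂) * P (B₂ ∩ D₂) :=
          fun w => E4 {w} {x₂} (measurableSet_singleton _) (measurableSet_singleton _) t₂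
        -- simplify key5/key6 using B ⊆ D
        have eB₁ : B₁ ∩ D₁ = B₁ := Set.inter_eq_left.mpr hB₁D₁
        have eB₂ : B₂ ∩ D₂ = B₂ := Set.inter_eq_left.mpr hB₂D₂
        have key5' : ∀ w : 𝒲, P (B₁ ∩ W ⁻¹' {w}) * P D₁
            = P (W ⁻¹' {w} ∩ D₁) * P B₁ := by
          intro w
          have h := key5 w
          rw [Set.inter_assoc, eB₁, Set.inter_comm (W ⁻¹' {w}) B₁] at h
          exact h
        have key6' : ∀ w : 𝒲, P (B₂ ∩ W ⁻¹' {w}) * P D₂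
            = P (W ⁻¹' {w} ∩ D₂) * P B₂ := by
          intro w
          have h := key6 w
          rw [Set.inter_assoc, eB₂, Set.inter_comm (W ⁻¹' {w}) B₂] at h
          exact h
        -- (A_w)
        have Aw : ∀ w : 𝒲, P (B₁ ∩ B₂ ∩ W ⁻¹' {w}) * (P D₁ * P D₂)
            = P B₁ * P B₂ * P (D₁ ∩ D₂ ∩ W ⁻¹' {w}) := by
          intro w
          by_cases hw : μ (W ⁻¹' {w}) = 0
          · rw [Pz _ _ Set.inter_subset_right hw, Pz _ _ Set.inter_subset_right hw]
            ring
          · have hp : P (W ⁻¹' {w}) ≠ 0 :=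
              ENNReal.toReal_ne_zero.mpr ⟨hw, measure_ne_top μ _⟩
            apply mul_right_cancel₀ hp
            have c1 : W ⁻¹' {w} ∩ D₁ = D₁ ∩ W ⁻¹' {w} := Set.inter_comm _ _
            have c2 : W ⁻¹' {w} ∩ D₂ = D₂ ∩ W ⁻¹' {w} := Set.inter_comm _ _
            have h5 := key5' w; have h6 := key6' w
            rw [c1] at h5; rw [c2] at h6
            linear_combination (P D₁ * P D₂) * key1 w
              + (P (B₂ ∩ W ⁻¹' {w}) * P D₂) * h5
              + (P (D₁ ∩ W ⁻¹' {w}) * P B₁) * h6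
              - (P B₁ * P B₂) * key2 w
        -- (B_w)
        have Bw : ∀ w : 𝒲, P (A ∩ (B₁ ∩ B₂) ∩ W ⁻¹' {w}) * (P D₁ * P D₂)
            = P B₁ * P B₂ * P (A ∩ (D₁ ∩ D₂) ∩ W ⁻¹' {w}) := by
          intro w
          by_cases hw : μ (W ⁻¹' {w}) = 0
          · rw [Pz _ _ Set.inter_subset_right hw, Pz _ _ Set.inter_subset_right hw]
            ring
          · have hp : P (W ⁻¹' {w}) ≠ 0 :=
              ENNReal.toReal_ne_zero.mpr ⟨hw, measure_ne_top μ _⟩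
            apply mul_right_cancel₀ hp
            linear_combination (P D₁ * P D₂) * key3 w
              + P (A ∩ W ⁻¹' {w}) * Aw w
              - (P B₁ * P B₂) * key4 w
        -- sum over w
        have I : P (A ∩ (B₁ ∩ B₂)) * (P D₁ * P D₂) = P B₁ * P B₂ * P (A ∩ (D₁ ∩ D₂)) := by
          rw [Pfib (A ∩ (B₁ ∩ B₂)), Pfib (A ∩ (D₁ ∩ D₂)), Finset.sum_mul, Finset.mul_sum]
          exact Finset.sum_congr rfl fun w _ => Bw w
        have II : P (B₁ ∩ B₂) * (P D₁ * P D₂) = P B₁ * P B₂ * P (D₁ ∩ D₂) := by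
          rw [Pfib (B₁ ∩ B₂), Pfib (D₁ ∩ D₂), Finset.sum_mul, Finset.mul_sum]
          exact Finset.sum_congr rfl fun w _ => Aw w
        -- reduce the goal using B ⊆ D
        have hBD : B₁ ∩ B₂ ⊆ D₁ ∩ D₂ := Set.inter_subset_inter hB₁D₁ hB₂D₂
        have g1 : B₁ ∩ B₂ ∩ (D₁ ∩ D₂) = B₁ ∩ B₂ := Set.inter_eq_left.mpr hBD
        have g2 : A ∩ (B₁ ∩ B₂) ∩ (D₁ ∩ D₂) = A ∩ (B₁ ∩ B₂) := by
          rw [Set.inter_assoc, g1]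
        rw [g1, g2]
        -- final cancellation
        by_cases hD1 : μ D₁ = 0
        · have z1 : P (A ∩ (B₁ ∩ B₂)) = 0 :=
            Pz _ _ (fun ω hω => hB₁D₁ hω.2.1) hD1
          have z2 : P (B₁ ∩ B₂) = 0 := Pz _ _ (fun ω hω => hB₁D₁ hω.1) hD1
          rw [z1, z2]; ring
        by_cases hD2 : μ D₂ = 0
        · have z1 : P (A ∩ (B₁ ∩ B₂)) = 0 :=
            Pz _ _ (fun ω hω => hB₂D₂ hω.2.2) hD2
          have z2 : P (B₁ ∩ B₂) = 0 := Pz _ _ (fun ω hω => hB₂D₂ hω.2) hD2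
          rw [z1, z2]; ring
        have hq : P D₁ * P D₂ ≠ 0 :=
          mul_ne_zero (ENNReal.toReal_ne_zero.mpr ⟨hD1, measure_ne_top μ _⟩)
            (ENNReal.toReal_ne_zero.mpr ⟨hD2, measure_ne_top μ _⟩)
        apply mul_right_cancel₀ hq
        linear_combination P (D₁ ∩ D₂) * I - P (A ∩ (D₁ ∩ D₂)) * II
      · -- T₂ x₂ ≠ t₂ : everything is null
        have hBD : B₂ ∩ D₂ = ∅ := by
          ext ω
          simp only [Set.mem_inter_iff, Set.mem_preimage, Set.mem_singleton_iff,
            Set.mem_empty_iff_false, iff_false, hB₂, hD₂]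
          rintro ⟨h1, h2⟩
          exact ht2 (h1 ▸ h2)
        have hnull : μ (B₂ ∩ D₂) = 0 := by rw [hBD]; exact measure_empty
        have z1 : P (A ∩ (B₁ ∩ B₂) ∩ (D₁ ∩ D₂)) = 0 :=
          Pz _ (B₂ ∩ D₂) (fun ω hω => ⟨hω.1.2.2, hω.2.2⟩) hnull
        have z2 : P (B₁ ∩ B₂ ∩ (D₁ ∩ D₂)) = 0 :=
          Pz _ (B₂ ∩ D₂) (fun ω hω => ⟨hω.1.2, hω.2.2⟩) hnull
        rw [z1, z2]; ring
    · -- T₁ x₁ ≠ t₁ : everything is null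
      have hBD : B₁ ∩ D₁ = ∅ := by
        ext ω
        simp only [Set.mem_inter_iff, Set.mem_preimage, Set.mem_singleton_iff,
          Set.mem_empty_iff_false, iff_false, hB₁, hD₁]
        rintro ⟨h1, h2⟩
        exact ht1 (h1 ▸ h2)
      have hnull : μ (B₁ ∩ D₁) = 0 := by rw [hBD]; exact measure_empty
      have z1 : P (A ∩ (B₁ ∩ B₂) ∩ (D₁ ∩ D₂)) = 0 :=
        Pz _ (B₁ ∩ D₁) (fun ω hω => ⟨hω.1.2.1, hω.2.1⟩) hnull
      have z2 : P (B₁ ∩ B₂ ∩ (D₁ ∩ D₂)) = 0 :=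
        Pz _ (B₁ ∩ D₁) (fun ω hω => ⟨hω.1.1, hω.2.1⟩) hnull
      rw [z1, z2]; ring
  -- decompose the general set t into singleton fibers
  show P (A ∩ (fun ω => (X₁ ω, X₂ ω)) ⁻¹' t ∩ (D₁ ∩ D₂)) * P (D₁ ∩ D₂)
      = P (A ∩ (D₁ ∩ D₂)) * P ((fun ω => (X₁ ω, X₂ ω)) ⁻¹' t ∩ (D₁ ∩ D₂))
  rw [Pfib2 (A ∩ (fun ω => (X₁ ω, X₂ ω)) ⁻¹' t ∩ (D₁ ∩ D₂)),
    Pfib2 ((fun ω => (X₁ ω, X₂ ω)) ⁻¹' t ∩ (D₁ ∩ D₂)), Finset.sum_mul, Finset.mul_sum]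
  refine Finset.sum_congr rfl ?_
  rintro ⟨x₁, x₂⟩ -
  by_cases hxt : (x₁, x₂) ∈ t
  · have s1 : (fun ω => (X₁ ω, X₂ ω)) ⁻¹' {(x₁, x₂)}
        ∩ (A ∩ (fun ω => (X₁ ω, X₂ ω)) ⁻¹' t ∩ (D₁ ∩ D₂))
        = A ∩ (X₁ ⁻¹' {x₁} ∩ X₂ ⁻¹' {x₂}) ∩ (D₁ ∩ D₂) := by
      ext ω
      simp only [Set.mem_inter_iff, Set.mem_preimage, Set.mem_singleton_iff, Prod.mk.injEq]
      constructor
      · rintro ⟨⟨h1, h2⟩, ⟨hA', -⟩, hD⟩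
        exact ⟨⟨hA', h1, h2⟩, hD⟩
      · rintro ⟨⟨hA', h1, h2⟩, hD⟩
        exact ⟨⟨h1, h2⟩, ⟨hA', by rw [h1, h2]; exact hxt⟩, hD⟩
    have s2 : (fun ω => (X₁ ω, X₂ ω)) ⁻¹' {(x₁, x₂)}
        ∩ ((fun ω => (X₁ ω, X₂ ω)) ⁻¹' t ∩ (D₁ ∩ D₂))
        = X₁ ⁻¹' {x₁} ∩ X₂ ⁻¹' {x₂} ∩ (D₁ ∩ D₂) := by
      ext ω
      simp only [Set.mem_inter_iff, Set.mem_preimage, Set.mem_singleton_iff, Prod.mk.injEq]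
      constructor
      · rintro ⟨⟨h1, h2⟩, -, hD⟩
        exact ⟨⟨h1, h2⟩, hD⟩
      · rintro ⟨⟨h1, h2⟩, hD⟩
        exact ⟨⟨h1, h2⟩, by rw [h1, h2]; exact hxt, hD⟩
    rw [s1, s2]
    exact core x₁ x₂
  · have s1 : (fun ω => (X₁ ω, X₂ ω)) ⁻¹' {(x₁, x₂)}
        ∩ (A ∩ (fun ω => (X₁ ω, X₂ ω)) ⁻¹' t ∩ (D₁ ∩ D₂)) = ∅ := by
      ext ω
      simp only [Set.mem_inter_iff, Set.mem_preimage, Set.mem_singleton_iff,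
        Set.mem_empty_iff_false, iff_false]
      rintro ⟨h1, ⟨-, h2⟩, -⟩
      exact hxt (h1 ▸ h2)
    have s2 : (fun ω => (X₁ ω, X₂ ω)) ⁻¹' {(x₁, x₂)}
        ∩ ((fun ω => (X₁ ω, X₂ ω)) ⁻¹' t ∩ (D₁ ∩ D₂)) = ∅ := by
      ext ω
      simp only [Set.mem_inter_iff, Set.mem_preimage, Set.mem_singleton_iff,
        Set.mem_empty_iff_false, iff_false]
      rintro ⟨h1, h2, -⟩
      exact hxt (h1 ▸ h2)
    rw [s1, s2]
    simp [hP]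
end Helpers
end

section
/- Theorem 4 (optimality of quantizing sufficient statistics under the HCI model): Let θ, W, X1, X2 be random variables taking values in finite sets such that X1 and X2 are conditionally independent given W, θ and (X1, X2) are conditionally independent given W, and for i = 1, 2, W and Xi are conditionally independent given Ti(Xi) (Ti(Xi) locally sufficient for W). Fix L ≥ 1 and a cost d : Θ × Θ̂ → ℝ≥0. Then the minimum over quantizers γ1 : 𝒳1 → {0,…,L−1}, γ2 : 𝒳2 → {0,…,L−1} and estimators h : {0,…,L−1}² → Θ̂ of E[d(θ, h(γ1(X1), γ2(X2)))] equals the minimum over quantizers γ1' : 𝒯1 → {0,…,L−1}, γ2' : 𝒯2 → {0,…,L−1} and estimators h' of E[d(θ, h'(γ1'(T1(X1)), γ2'(T2(X2))))]. -/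
open MeasureTheory ProbabilityTheory
open scoped ENNReal

lemma hci_cond_factor {Ω 𝒵 β γ : Type*} {mΩ : MeasurableSpace Ω} [StandardBorelSpace Ω]
    [MeasurableSpace 𝒵] [MeasurableSingletonClass 𝒵]
    [MeasurableSpace β] [MeasurableSpace γ]
    (μ : Measure Ω) [IsProbabilityMeasure μ]
    {Z : Ω → 𝒵} (hZ : Measurable Z) {f : Ω → β} {g : Ω → γ}
    (hf : Measurable f) (hg : Measurable g)
    (hind : CondIndepFun (MeasurableSpace.comap Z inferInstance) hZ.comap_le f g μ)
    {S : Set β} {T : Set γ} (hS : MeasurableSet S) (hT : MeasurableSet T) (z : 𝒵) :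
    μ (f ⁻¹' S ∩ g ⁻¹' T ∩ Z ⁻¹' {z}) * μ (Z ⁻¹' {z})
      = μ (f ⁻¹' S ∩ Z ⁻¹' {z}) * μ (g ⁻¹' T ∩ Z ⁻¹' {z}) := by
  classical
  set A := f ⁻¹' S with hA
  set B := g ⁻¹' T with hB
  set C := Z ⁻¹' {z} with hC
  have hAm : MeasurableSet A := hf hS
  have hBm : MeasurableSet B := hg hT
  have hCm' : MeasurableSet[MeasurableSpace.comap Z inferInstance] C :=
    ⟨{z}, measurableSet_singleton z, rfl⟩
  have hCm : MeasurableSet C := hZ (measurableSet_singleton z)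
  by_cases hμC : μ C = 0
  · have h1 : μ (A ∩ B ∩ C) = 0 :=
      le_antisymm (le_trans (measure_mono Set.inter_subset_right) hμC.le) zero_le
    have h2 : μ (A ∩ C) = 0 :=
      le_antisymm (le_trans (measure_mono Set.inter_subset_right) hμC.le) zero_le
    rw [h1, h2, zero_mul, zero_mul]
  · obtain ⟨ω₀, hω₀⟩ : C.Nonempty := by
      rcases Set.eq_empty_or_nonempty C with hemp | hne
      · exact absurd (hemp ▸ measure_empty) hμC
      · exact hne
    have key : ∀ (u : Ω → ℝ), Measurable[MeasurableSpace.comap Z inferInstance] u →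
        ∀ ω ∈ C, u ω = u ω₀ := by
      intro u hu ω hω
      obtain ⟨S', hS', hpre⟩ :=
        MeasurableSpace.measurableSet_comap.mp (hu (measurableSet_singleton (u ω₀)))
      have hω₀' : ω₀ ∈ Z ⁻¹' S' := by
        rw [hpre]; exact Set.mem_singleton _
      have hZeq : Z ω = Z ω₀ := by
        have e1 : Z ω = z := hω
        have e2 : Z ω₀ = z := hω₀
        rw [e1, e2]
      have hmem : ω ∈ Z ⁻¹' S' := by
        simp only [Set.mem_preimage, hZeq]; exact hω₀'
      rw [hpre] at hmem
      exact hmem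
    have hmle : MeasurableSpace.comap Z inferInstance ≤ mΩ := hZ.comap_le
    have hintA : Integrable (A.indicator fun _ => (1:ℝ)) μ := (integrable_const 1).indicator hAm
    have hintB : Integrable (B.indicator fun _ => (1:ℝ)) μ := (integrable_const 1).indicator hBm
    have hintAB : Integrable ((A ∩ B).indicator fun _ => (1:ℝ)) μ :=
      (integrable_const 1).indicator (hAm.inter hBm)
    have hae := (condIndepFun_iff_condExp_inter_preimage_eq_mul hf hg).mp hind S T hS hT
    have hmeasA : Measurable[MeasurableSpace.comap Z inferInstance]
        (μ⟦A|MeasurableSpace.comap Z inferInstance⟧) := stronglyMeasurable_condExp.measurable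
    have hmeasB : Measurable[MeasurableSpace.comap Z inferInstance]
        (μ⟦B|MeasurableSpace.comap Z inferInstance⟧) := stronglyMeasurable_condExp.measurable
    have intC : ∀ (D : Set Ω), MeasurableSet D →
        ∫ x in C, D.indicator (fun _ => (1:ℝ)) x ∂μ = (μ (D ∩ C)).toReal := by
      intro D hD
      rw [setIntegral_indicator hD, setIntegral_const, smul_eq_mul, mul_one, Set.inter_comm, measureReal_def]
    have eA : (μ⟦A|MeasurableSpace.comap Z inferInstance⟧) ω₀ * (μ C).toReal
        = (μ (A ∩ C)).toReal := by
      have h1 : ∫ x in C, (μ⟦A|MeasurableSpace.comap Z inferInstance⟧) x ∂μ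
          = (μ (A ∩ C)).toReal := by
        rw [setIntegral_condExp hmle hintA hCm', intC A hAm]
      have h2 : ∫ x in C, (μ⟦A|MeasurableSpace.comap Z inferInstance⟧) x ∂μ
          = (μ⟦A|MeasurableSpace.comap Z inferInstance⟧) ω₀ * (μ C).toReal := by
        rw [setIntegral_congr_fun hCm (fun ω hω => key _ hmeasA ω hω), setIntegral_const,
          smul_eq_mul, mul_comm, measureReal_def]
      rw [← h1, h2]
    have eB : (μ⟦B|MeasurableSpace.comap Z inferInstance⟧) ω₀ * (μ C).toReal
        = (μ (B ∩ C)).toReal := by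
      have h1 : ∫ x in C, (μ⟦B|MeasurableSpace.comap Z inferInstance⟧) x ∂μ
          = (μ (B ∩ C)).toReal := by
        rw [setIntegral_condExp hmle hintB hCm', intC B hBm]
      have h2 : ∫ x in C, (μ⟦B|MeasurableSpace.comap Z inferInstance⟧) x ∂μ
          = (μ⟦B|MeasurableSpace.comap Z inferInstance⟧) ω₀ * (μ C).toReal := by
        rw [setIntegral_congr_fun hCm (fun ω hω => key _ hmeasB ω hω), setIntegral_const,
          smul_eq_mul, mul_comm, measureReal_def]
      rw [← h1, h2]
    have eAB : (μ (A ∩ B ∩ C)).toReal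
        = (μ⟦A|MeasurableSpace.comap Z inferInstance⟧) ω₀
          * (μ⟦B|MeasurableSpace.comap Z inferInstance⟧) ω₀ * (μ C).toReal := by
      have h1 : ∫ x in C, (μ⟦A ∩ B|MeasurableSpace.comap Z inferInstance⟧) x ∂μ
          = (μ (A ∩ B ∩ C)).toReal := by
        rw [setIntegral_condExp hmle hintAB hCm', intC _ (hAm.inter hBm)]
      have h2 : ∫ x in C, (μ⟦A ∩ B|MeasurableSpace.comap Z inferInstance⟧) x ∂μ
          = (μ⟦A|MeasurableSpace.comap Z inferInstance⟧) ω₀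
            * (μ⟦B|MeasurableSpace.comap Z inferInstance⟧) ω₀ * (μ C).toReal := by
        rw [setIntegral_congr_ae hCm (hae.mono fun x hx _ => hx)]
        have heq : Set.EqOn
            (fun ω => (μ⟦A|MeasurableSpace.comap Z inferInstance⟧) ω
              * (μ⟦B|MeasurableSpace.comap Z inferInstance⟧) ω)
            (fun _ => (μ⟦A|MeasurableSpace.comap Z inferInstance⟧) ω₀
              * (μ⟦B|MeasurableSpace.comap Z inferInstance⟧) ω₀) C := by
          intro ω hω
          simp only
          rw [key _ hmeasA ω hω, key _ hmeasB ω hω]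
        rw [setIntegral_congr_fun hCm heq, setIntegral_const, smul_eq_mul, mul_comm, measureReal_def]
      rw [← h1, h2]
    refine (ENNReal.toReal_eq_toReal_iff'
      (ENNReal.mul_ne_top (measure_ne_top μ _) (measure_ne_top μ _))
      (ENNReal.mul_ne_top (measure_ne_top μ _) (measure_ne_top μ _))).mp ?_
    rw [ENNReal.toReal_mul, ENNReal.toReal_mul, eAB, ← eA, ← eB]
    ring

lemma hci_ennreal_key {J pw a K b1 b2 c1 c2 ν1 ν2 τ1 τ2 : ℝ≥0∞}
    (hpwt : pw ≠ ⊤) (hτ1t : τ1 ≠ ⊤) (hτ2t : τ2 ≠ ⊤)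
    (hJpw : J ≤ pw) (hapw : a ≤ pw) (hJν1 : J ≤ ν1) (hJν2 : J ≤ ν2)
    (hν1 : ν1 ≤ τ1) (hν2 : ν2 ≤ τ2)
    (h1 : J * pw = a * K) (h2 : K * pw = b1 * b2)
    (h3 : b1 * τ1 = c1 * ν1) (h4 : b2 * τ2 = c2 * ν2) :
    J = a * c1 * c2 / (pw * pw) * (ν1 / τ1) * (ν2 / τ2) := by
  by_cases hpw : pw = 0
  · have ha : a = 0 := le_antisymm (hpw ▸ hapw) zero_le
    have hJ : J = 0 := le_antisymm (hpw ▸ hJpw) zero_le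
    simp [ha, hJ]
  by_cases hν1z : ν1 = 0
  · have hJ : J = 0 := le_antisymm (hν1z ▸ hJν1) zero_le
    simp [hν1z, hJ]
  by_cases hν2z : ν2 = 0
  · have hJ : J = 0 := le_antisymm (hν2z ▸ hJν2) zero_le
    simp [hν2z, hJ]
  have hτ1z : τ1 ≠ 0 := fun hz => hν1z (le_antisymm (hz ▸ hν1) zero_le)
  have hτ2z : τ2 ≠ 0 := fun hz => hν2z (le_antisymm (hz ▸ hν2) zero_le)
  have hD0 : pw * pw * τ1 * τ2 ≠ 0 :=
    mul_ne_zero (mul_ne_zero (mul_ne_zero hpw hpw) hτ1z) hτ2z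
  have hDt : pw * pw * τ1 * τ2 ≠ ⊤ :=
    ENNReal.mul_ne_top (ENNReal.mul_ne_top (ENNReal.mul_ne_top hpwt hpwt) hτ1t) hτ2t
  have dJ : (pw * pw * τ1 * τ2) * J = a * c1 * c2 * ν1 * ν2 := by
    calc (pw * pw * τ1 * τ2) * J = τ1 * τ2 * pw * (J * pw) := by ring
      _ = τ1 * τ2 * pw * (a * K) := by rw [h1]
      _ = τ1 * τ2 * a * (K * pw) := by ring
      _ = τ1 * τ2 * a * (b1 * b2) := by rw [h2]
      _ = a * (b1 * τ1) * (b2 * τ2) := by ring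
      _ = a * (c1 * ν1) * (c2 * ν2) := by rw [h3, h4]
      _ = a * c1 * c2 * ν1 * ν2 := by ring
  have dR : (pw * pw * τ1 * τ2) * (a * c1 * c2 / (pw * pw) * (ν1 / τ1) * (ν2 / τ2))
      = a * c1 * c2 * ν1 * ν2 := by
    have e1 : a * c1 * c2 / (pw * pw) * (pw * pw) = a * c1 * c2 :=
      ENNReal.div_mul_cancel (mul_ne_zero hpw hpw) (ENNReal.mul_ne_top hpwt hpwt)
    have e2 : ν1 / τ1 * τ1 = ν1 := ENNReal.div_mul_cancel hτ1z hτ1t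
    have e3 : ν2 / τ2 * τ2 = ν2 := ENNReal.div_mul_cancel hτ2z hτ2t
    calc (pw * pw * τ1 * τ2) * (a * c1 * c2 / (pw * pw) * (ν1 / τ1) * (ν2 / τ2))
        = (a * c1 * c2 / (pw * pw) * (pw * pw)) * (ν1 / τ1 * τ1) * (ν2 / τ2 * τ2) := by ring
      _ = a * c1 * c2 * ν1 * ν2 := by rw [e1, e2, e3]
  rw [(ENNReal.eq_div_iff hD0 hDt).mpr dJ, (ENNReal.eq_div_iff hD0 hDt).mpr dR]

lemma hci_rearrange {Θ 𝒲 𝒳₁ 𝒳₂ 𝒯₁ 𝒯₂ : Type*}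
    [Fintype Θ] [Fintype 𝒲] [Fintype 𝒳₁] [Fintype 𝒳₂]
    (T₁ : 𝒳₁ → 𝒯₁) (T₂ : 𝒳₂ → 𝒯₂) (D : Θ → 𝒳₁ → 𝒳₂ → ℝ≥0∞)
    (G : Θ → 𝒲 → 𝒯₁ → 𝒯₂ → ℝ≥0∞) (r1 : 𝒳₁ → ℝ≥0∞) (r2 : 𝒳₂ → ℝ≥0∞) :
    ∑ s, ∑ x1, ∑ x2, D s x1 x2 * ∑ w, G s w (T₁ x1) (T₂ x2) * r1 x1 * r2 x2
      = ∑ x1, ∑ x2, r1 x1 * r2 x2 * ∑ s, ∑ w, D s x1 x2 * G s w (T₁ x1) (T₂ x2) := by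
  rw [Finset.sum_comm]
  refine Finset.sum_congr rfl fun x1 _ => ?_
  rw [Finset.sum_comm]
  refine Finset.sum_congr rfl fun x2 _ => ?_
  simp only [Finset.mul_sum]
  exact Finset.sum_congr rfl fun s _ => Finset.sum_congr rfl fun w _ => by ring

lemma hci_derand_core {𝒳₁ 𝒳₂ 𝒯₁ 𝒯₂ ΘHat : Type*} [Fintype 𝒳₁] [Fintype 𝒳₂] {L : ℕ}
    (hL : 1 ≤ L) (T₁ : 𝒳₁ → 𝒯₁) (T₂ : 𝒳₂ → 𝒯₂) (r1 : 𝒳₁ → ℝ≥0∞) (r2 : 𝒳₂ → ℝ≥0∞)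
    (M : 𝒯₁ → 𝒯₂ → ΘHat → ℝ≥0∞) (h : Fin L × Fin L → ΘHat)
    (γ₁ : 𝒳₁ → Fin L) (γ₂ : 𝒳₂ → Fin L) :
    ∃ (γ₁' : 𝒯₁ → Fin L) (γ₂' : 𝒯₂ → Fin L),
      ∑ x1, ∑ x2, r1 x1 * r2 x2 * M (T₁ x1) (T₂ x2) (h (γ₁' (T₁ x1), γ₂' (T₂ x2)))
        ≤ ∑ x1, ∑ x2, r1 x1 * r2 x2 * M (T₁ x1) (T₂ x2) (h (γ₁ x1, γ₂ x2)) := by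
  classical
  have hFL : ∀ (F : Fin L → ℝ≥0∞), ∃ z0, ∀ z, F z0 ≤ F z := by
    intro F
    obtain ⟨z0, -, hz0⟩ := Finset.exists_min_image Finset.univ F ⟨⟨0, hL⟩, Finset.mem_univ _⟩
    exact ⟨z0, fun z => hz0 z (Finset.mem_univ z)⟩
  choose γ₁' hγ₁' using fun t =>
    hFL (fun z => ∑ x2, r2 x2 * M t (T₂ x2) (h (z, γ₂ x2)))
  choose γ₂' hγ₂' using fun t =>
    hFL (fun z => ∑ x1, r1 x1 * M (T₁ x1) t (h (γ₁' (T₁ x1), z)))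
  refine ⟨γ₁', γ₂', ?_⟩
  have reprA : ∀ (k1 : 𝒳₁ → Fin L),
      ∑ x1, ∑ x2, r1 x1 * r2 x2 * M (T₁ x1) (T₂ x2) (h (k1 x1, γ₂ x2))
        = ∑ x1, r1 x1 * ∑ x2, r2 x2 * M (T₁ x1) (T₂ x2) (h (k1 x1, γ₂ x2)) := by
    intro k1
    refine Finset.sum_congr rfl fun x1 _ => ?_
    rw [Finset.mul_sum]
    exact Finset.sum_congr rfl fun x2 _ => by ring
  have reprB : ∀ (k2 : 𝒳₂ → Fin L),
      ∑ x1, ∑ x2, r1 x1 * r2 x2 * M (T₁ x1) (T₂ x2) (h (γ₁' (T₁ x1), k2 x2))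
        = ∑ x2, r2 x2 * ∑ x1, r1 x1 * M (T₁ x1) (T₂ x2) (h (γ₁' (T₁ x1), k2 x2)) := by
    intro k2
    rw [Finset.sum_comm]
    refine Finset.sum_congr rfl fun x2 _ => ?_
    rw [Finset.mul_sum]
    exact Finset.sum_congr rfl fun x1 _ => by ring
  calc ∑ x1, ∑ x2, r1 x1 * r2 x2 * M (T₁ x1) (T₂ x2) (h (γ₁' (T₁ x1), γ₂' (T₂ x2)))
      = ∑ x2, r2 x2 * ∑ x1, r1 x1 * M (T₁ x1) (T₂ x2) (h (γ₁' (T₁ x1), γ₂' (T₂ x2))) := reprB _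
    _ ≤ ∑ x2, r2 x2 * ∑ x1, r1 x1 * M (T₁ x1) (T₂ x2) (h (γ₁' (T₁ x1), γ₂ x2)) :=
        Finset.sum_le_sum fun x2 _ => mul_le_mul_right (hγ₂' (T₂ x2) (γ₂ x2)) _
    _ = ∑ x1, ∑ x2, r1 x1 * r2 x2 * M (T₁ x1) (T₂ x2) (h (γ₁' (T₁ x1), γ₂ x2)) := (reprB _).symm
    _ = ∑ x1, r1 x1 * ∑ x2, r2 x2 * M (T₁ x1) (T₂ x2) (h (γ₁' (T₁ x1), γ₂ x2)) := reprA _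
    _ ≤ ∑ x1, r1 x1 * ∑ x2, r2 x2 * M (T₁ x1) (T₂ x2) (h (γ₁ x1, γ₂ x2)) :=
        Finset.sum_le_sum fun x1 _ => mul_le_mul_right (hγ₁' (T₁ x1) (γ₁ x1)) _
    _ = ∑ x1, ∑ x2, r1 x1 * r2 x2 * M (T₁ x1) (T₂ x2) (h (γ₁ x1, γ₂ x2)) := (reprA _).symm

lemma hci_lintegral_eq_sum3 {Ω Θ 𝒳₁ 𝒳₂ : Type*} [MeasurableSpace Ω]
    [Fintype Θ] [MeasurableSpace Θ] [MeasurableSingletonClass Θ]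
    [Fintype 𝒳₁] [MeasurableSpace 𝒳₁] [MeasurableSingletonClass 𝒳₁]
    [Fintype 𝒳₂] [MeasurableSpace 𝒳₂] [MeasurableSingletonClass 𝒳₂]
    (μ : Measure Ω) (θ : Ω → Θ) (X₁ : Ω → 𝒳₁) (X₂ : Ω → 𝒳₂)
    (hθ : Measurable θ) (hX₁ : Measurable X₁) (hX₂ : Measurable X₂)
    (F : Θ → 𝒳₁ → 𝒳₂ → ℝ≥0∞) :
    ∫⁻ ω, F (θ ω) (X₁ ω) (X₂ ω) ∂μ
      = ∑ s, ∑ x1, ∑ x2, F s x1 x2 * μ (θ ⁻¹' {s} ∩ (X₁ ⁻¹' {x1} ∩ X₂ ⁻¹' {x2})) := by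
  have hY : Measurable fun ω => ((θ ω, X₁ ω, X₂ ω) : Θ × 𝒳₁ × 𝒳₂) :=
    hθ.prodMk (hX₁.prodMk hX₂)
  have h0 : ∫⁻ ω, F (θ ω) (X₁ ω) (X₂ ω) ∂μ
      = ∫⁻ p : Θ × 𝒳₁ × 𝒳₂, F p.1 p.2.1 p.2.2
          ∂(μ.map (fun ω => (θ ω, X₁ ω, X₂ ω))) :=
    (lintegral_map (f := fun p : Θ × 𝒳₁ × 𝒳₂ => F p.1 p.2.1 p.2.2)
      (measurable_of_countable _) hY).symm
  rw [h0, lintegral_fintype, Fintype.sum_prod_type]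
  refine Finset.sum_congr rfl fun s _ => ?_
  rw [Fintype.sum_prod_type]
  refine Finset.sum_congr rfl fun x1 _ => Finset.sum_congr rfl fun x2 _ => ?_
  rw [Measure.map_apply hY (measurableSet_singleton _)]
  have hset : (fun ω => (θ ω, X₁ ω, X₂ ω)) ⁻¹' {(s, x1, x2)}
      = θ ⁻¹' {s} ∩ (X₁ ⁻¹' {x1} ∩ X₂ ⁻¹' {x2}) := by
    ext ω; simp [Prod.ext_iff]
  rw [hset]


/-- **Theorem 4 (optimality of quantizing sufficient statistics under the HCI model).**
Suppose `X₁` and `X₂` are conditionally independent given the hidden variable `W`, `θ` and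
`(X₁, X₂)` are conditionally independent given `W`, and for `i = 1, 2`, `W` and `Xᵢ` are
conditionally independent given `Tᵢ(Xᵢ)`. Then for any `L ≥ 1` and cost `d`, the minimum
Bayesian risk over quantizers of the raw data equals the minimum risk over quantizers of the
sufficient statistics `Tᵢ(Xᵢ)`. -/
theorem decentralized_quantization_of_sufficient_statistics_hci
    {Ω Θ 𝒲 𝒳₁ 𝒳₂ 𝒯₁ 𝒯₂ ΘHat : Type*}
    [MeasurableSpace Ω] [StandardBorelSpace Ω] [Nonempty Ω] [Fintype Ω]
    [Fintype Θ] [MeasurableSpace Θ] [MeasurableSingletonClass Θ]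
    [Fintype 𝒲] [MeasurableSpace 𝒲] [MeasurableSingletonClass 𝒲]
    [Fintype 𝒳₁] [MeasurableSpace 𝒳₁] [MeasurableSingletonClass 𝒳₁]
    [Fintype 𝒳₂] [MeasurableSpace 𝒳₂] [MeasurableSingletonClass 𝒳₂]
    [Fintype 𝒯₁] [MeasurableSpace 𝒯₁] [MeasurableSingletonClass 𝒯₁]
    [Fintype 𝒯₂] [MeasurableSpace 𝒯₂] [MeasurableSingletonClass 𝒯₂]
    [Fintype ΘHat]
    (μ : Measure Ω) [IsProbabilityMeasure μ]
    (θ : Ω → Θ) (W : Ω → 𝒲) (X₁ : Ω → 𝒳₁) (X₂ : Ω → 𝒳₂)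
    (T₁ : 𝒳₁ → 𝒯₁) (T₂ : 𝒳₂ → 𝒯₂)
    (hθ : Measurable θ) (hW : Measurable W) (hX₁ : Measurable X₁) (hX₂ : Measurable X₂)
    (hT₁ : Measurable T₁) (hT₂ : Measurable T₂)
    -- HCI: X₁ and X₂ are conditionally independent given W
    (hci : CondIndepFun (MeasurableSpace.comap W inferInstance) hW.comap_le X₁ X₂ μ)
    -- HCI: θ and (X₁, X₂) are conditionally independent given W
    (hθW : CondIndepFun (MeasurableSpace.comap W inferInstance) hW.comap_le
      θ (fun ω => (X₁ ω, X₂ ω)) μ)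
    -- Tᵢ(Xᵢ) is locally sufficient for W, i = 1, 2
    (hloc₁ : CondIndepFun (MeasurableSpace.comap (fun ω => T₁ (X₁ ω)) inferInstance)
      ((hT₁.comp hX₁).comap_le) W X₁ μ)
    (hloc₂ : CondIndepFun (MeasurableSpace.comap (fun ω => T₂ (X₂ ω)) inferInstance)
      ((hT₂.comp hX₂).comap_le) W X₂ μ)
    (L : ℕ) (hL : 1 ≤ L) (d : Θ × ΘHat → NNReal) :
    (⨅ (γ₁ : 𝒳₁ → Fin L) (γ₂ : 𝒳₂ → Fin L) (h : Fin L × Fin L → ΘHat),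
        ∫⁻ ω, (d (θ ω, h (γ₁ (X₁ ω), γ₂ (X₂ ω))) : ℝ≥0∞) ∂μ)
      = ⨅ (γ₁' : 𝒯₁ → Fin L) (γ₂' : 𝒯₂ → Fin L) (h' : Fin L × Fin L → ΘHat),
        ∫⁻ ω, (d (θ ω, h' (γ₁' (T₁ (X₁ ω)), γ₂' (T₂ (X₂ ω)))) : ℝ≥0∞) ∂μ := by
  classical
  refine le_antisymm ?_ ?_
  · refine le_iInf fun γ₁' => le_iInf fun γ₂' => le_iInf fun h' => ?_
    exact iInf_le_of_le (fun x => γ₁' (T₁ x)) (iInf_le_of_le (fun x => γ₂' (T₂ x))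
      (iInf_le_of_le h' le_rfl))
  · refine le_iInf fun γ₁ => le_iInf fun γ₂ => le_iInf fun h => ?_
    have partition : ∀ (E : Set Ω), MeasurableSet E → μ E = ∑ w, μ (E ∩ W ⁻¹' {w}) := by
      intro E hE
      have hE' : E = ⋃ w ∈ (Finset.univ : Finset 𝒲), E ∩ W ⁻¹' {w} := by
        ext ω; simp
      conv_lhs => rw [hE']
      rw [measure_biUnion_finset ?_ (fun w _ => hE.inter (hW (measurableSet_singleton w)))]
      intro w1 _ w2 _ hne
      refine Set.disjoint_left.mpr fun ω h1 h2 => hne ?_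
      have e1 : W ω = w1 := h1.2
      have e2 : W ω = w2 := h2.2
      rw [← e1, e2]
    have per_w : ∀ (s : Θ) (x1 : 𝒳₁) (x2 : 𝒳₂) (w : 𝒲),
        μ (θ ⁻¹' {s} ∩ (X₁ ⁻¹' {x1} ∩ X₂ ⁻¹' {x2}) ∩ W ⁻¹' {w})
          = μ (θ ⁻¹' {s} ∩ W ⁻¹' {w})
              * μ (W ⁻¹' {w} ∩ (fun ω => T₁ (X₁ ω)) ⁻¹' {T₁ x1})
              * μ (W ⁻¹' {w} ∩ (fun ω => T₂ (X₂ ω)) ⁻¹' {T₂ x2})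
              / (μ (W ⁻¹' {w}) * μ (W ⁻¹' {w}))
            * (μ (X₁ ⁻¹' {x1}) / μ ((fun ω => T₁ (X₁ ω)) ⁻¹' {T₁ x1}))
            * (μ (X₂ ⁻¹' {x2}) / μ ((fun ω => T₂ (X₂ ω)) ⁻¹' {T₂ x2})) := by
      intro s x1 x2 w
      have hsub1 : X₁ ⁻¹' {x1} ∩ (fun ω => T₁ (X₁ ω)) ⁻¹' {T₁ x1} = X₁ ⁻¹' {x1} :=
        Set.inter_eq_left.mpr fun ω hω => by
          simp only [Set.mem_preimage, Set.mem_singleton_iff] at hω ⊢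
          rw [hω]
      have hsub2 : X₂ ⁻¹' {x2} ∩ (fun ω => T₂ (X₂ ω)) ⁻¹' {T₂ x2} = X₂ ⁻¹' {x2} :=
        Set.inter_eq_left.mpr fun ω hω => by
          simp only [Set.mem_preimage, Set.mem_singleton_iff] at hω ⊢
          rw [hω]
      have h1 := hci_cond_factor μ hW hθ (hX₁.prodMk hX₂) hθW
        (measurableSet_singleton s) (measurableSet_singleton (x1, x2)) w
      have hXX : ((fun ω => (X₁ ω, X₂ ω)) ⁻¹' {(x1, x2)}) = X₁ ⁻¹' {x1} ∩ X₂ ⁻¹' {x2} := by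
        ext ω; simp [Prod.ext_iff]
      rw [hXX] at h1
      have h2 := hci_cond_factor μ hW hX₁ hX₂ hci
        (measurableSet_singleton x1) (measurableSet_singleton x2) w
      have h3 := hci_cond_factor (Z := fun ω => T₁ (X₁ ω)) μ (hT₁.comp hX₁) hW hX₁ hloc₁
        (measurableSet_singleton w) (measurableSet_singleton x1) (T₁ x1)
      rw [Set.inter_assoc, hsub1, Set.inter_comm (W ⁻¹' {w}) (X₁ ⁻¹' {x1})] at h3
      have h4 := hci_cond_factor (Z := fun ω => T₂ (X₂ ω)) μ (hT₂.comp hX₂) hW hX₂ hloc₂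
        (measurableSet_singleton w) (measurableSet_singleton x2) (T₂ x2)
      rw [Set.inter_assoc, hsub2, Set.inter_comm (W ⁻¹' {w}) (X₂ ⁻¹' {x2})] at h4
      exact hci_ennreal_key (measure_ne_top μ _) (measure_ne_top μ _) (measure_ne_top μ _)
        (measure_mono Set.inter_subset_right)
        (measure_mono Set.inter_subset_right)
        (measure_mono fun ω hω => hω.1.2.1)
        (measure_mono fun ω hω => hω.1.2.2)
        (measure_mono fun ω hω => by
          simp only [Set.mem_preimage, Set.mem_singleton_iff] at hω ⊢
          rw [hω])
        (measure_mono fun ω hω => by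
          simp only [Set.mem_preimage, Set.mem_singleton_iff] at hω ⊢
          rw [hω])
        h1 h2 h3 h4
    have hQ : ∀ (s : Θ) (x1 : 𝒳₁) (x2 : 𝒳₂),
        μ (θ ⁻¹' {s} ∩ (X₁ ⁻¹' {x1} ∩ X₂ ⁻¹' {x2}))
          = ∑ w, μ (θ ⁻¹' {s} ∩ W ⁻¹' {w})
              * μ (W ⁻¹' {w} ∩ (fun ω => T₁ (X₁ ω)) ⁻¹' {T₁ x1})
              * μ (W ⁻¹' {w} ∩ (fun ω => T₂ (X₂ ω)) ⁻¹' {T₂ x2})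
              / (μ (W ⁻¹' {w}) * μ (W ⁻¹' {w}))
            * (μ (X₁ ⁻¹' {x1}) / μ ((fun ω => T₁ (X₁ ω)) ⁻¹' {T₁ x1}))
            * (μ (X₂ ⁻¹' {x2}) / μ ((fun ω => T₂ (X₂ ω)) ⁻¹' {T₂ x2})) := by
      intro s x1 x2
      rw [partition _ ((hθ (measurableSet_singleton s)).inter
        ((hX₁ (measurableSet_singleton x1)).inter (hX₂ (measurableSet_singleton x2))))]
      exact Finset.sum_congr rfl fun w _ => per_w s x1 x2 w
    have risk_fmla : ∀ (k1 : 𝒳₁ → Fin L) (k2 : 𝒳₂ → Fin L),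
        ∫⁻ ω, (d (θ ω, h (k1 (X₁ ω), k2 (X₂ ω))) : ℝ≥0∞) ∂μ
          = ∑ x1, ∑ x2,
              (μ (X₁ ⁻¹' {x1}) / μ ((fun ω => T₁ (X₁ ω)) ⁻¹' {T₁ x1}))
                * (μ (X₂ ⁻¹' {x2}) / μ ((fun ω => T₂ (X₂ ω)) ⁻¹' {T₂ x2}))
                * ∑ s, ∑ w, (d (s, h (k1 x1, k2 x2)) : ℝ≥0∞)
                    * (μ (θ ⁻¹' {s} ∩ W ⁻¹' {w})
                        * μ (W ⁻¹' {w} ∩ (fun ω => T₁ (X₁ ω)) ⁻¹' {T₁ x1})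
                        * μ (W ⁻¹' {w} ∩ (fun ω => T₂ (X₂ ω)) ⁻¹' {T₂ x2})
                        / (μ (W ⁻¹' {w}) * μ (W ⁻¹' {w}))) := by
      intro k1 k2
      refine (hci_lintegral_eq_sum3 μ θ X₁ X₂ hθ hX₁ hX₂
        (fun s x1 x2 => (d (s, h (k1 x1, k2 x2)) : ℝ≥0∞))).trans ?_
      refine Eq.trans (Finset.sum_congr rfl fun s _ => Finset.sum_congr rfl fun x1 _ =>
        Finset.sum_congr rfl fun x2 _ => by rw [hQ s x1 x2]) ?_
      exact hci_rearrange T₁ T₂ (fun s x1 x2 => (d (s, h (k1 x1, k2 x2)) : ℝ≥0∞))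
        (fun s w t1 t2 => μ (θ ⁻¹' {s} ∩ W ⁻¹' {w})
          * μ (W ⁻¹' {w} ∩ (fun ω => T₁ (X₁ ω)) ⁻¹' {t1})
          * μ (W ⁻¹' {w} ∩ (fun ω => T₂ (X₂ ω)) ⁻¹' {t2})
          / (μ (W ⁻¹' {w}) * μ (W ⁻¹' {w})))
        (fun x1 => μ (X₁ ⁻¹' {x1}) / μ ((fun ω => T₁ (X₁ ω)) ⁻¹' {T₁ x1}))
        (fun x2 => μ (X₂ ⁻¹' {x2}) / μ ((fun ω => T₂ (X₂ ω)) ⁻¹' {T₂ x2}))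
    obtain ⟨γ₁', γ₂', hle⟩ := hci_derand_core hL T₁ T₂
      (fun x1 => μ (X₁ ⁻¹' {x1}) / μ ((fun ω => T₁ (X₁ ω)) ⁻¹' {T₁ x1}))
      (fun x2 => μ (X₂ ⁻¹' {x2}) / μ ((fun ω => T₂ (X₂ ω)) ⁻¹' {T₂ x2}))
      (fun t1 t2 th => ∑ s, ∑ w, (d (s, th) : ℝ≥0∞)
        * (μ (θ ⁻¹' {s} ∩ W ⁻¹' {w})
            * μ (W ⁻¹' {w} ∩ (fun ω => T₁ (X₁ ω)) ⁻¹' {t1})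
            * μ (W ⁻¹' {w} ∩ (fun ω => T₂ (X₂ ω)) ⁻¹' {t2})
            / (μ (W ⁻¹' {w}) * μ (W ⁻¹' {w}))))
      h γ₁ γ₂
    refine iInf_le_of_le γ₁' (iInf_le_of_le γ₂' (iInf_le_of_le h ?_))
    have e1 := risk_fmla (fun x => γ₁' (T₁ x)) (fun x => γ₂' (T₂ x))
    have e2 := risk_fmla γ₁ γ₂
    exact e1.trans_le (hle.trans_eq e2.symm)
end

section
/- HCI model implies the factorization of Theorem 5 (easy direction of Proposition 2): Let θ, W, X1, X2 be random variables taking values in finite sets such that X1 and X2 are conditionally independent given W, θ and (X1, X2) are conditionally independent given W, and W and X1 are conditionally independent given T1(X1) for a statistic T1 : 𝒳1 → 𝒯1. Then there exist nonnegative functions g : 𝒳1 → ℝ≥0 and f : 𝒯1 × 𝒳2 × Θ → ℝ≥0 such that the joint probability mass function satisfies p(x1, x2, t) = g(x1) · f(T1(x1), x2, t) for all x1 ∈ 𝒳1, x2 ∈ 𝒳2, t ∈ Θ. -/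
open MeasureTheory ProbabilityTheory
open scoped ENNReal

section helpers
lemma comap_measurable_const_on_fiber {Ω 𝒱 : Type*} [MeasurableSpace 𝒱]
    {V : Ω → 𝒱} {u : Ω → ℝ}
    (hu : Measurable[MeasurableSpace.comap V inferInstance] u)
    {ω ω' : Ω} (h : V ω = V ω') : u ω = u ω' := by
  obtain ⟨B, -, hB⟩ := hu (measurableSet_singleton (u ω))
  have hω : ω ∈ V ⁻¹' B := by
    have : ω ∈ u ⁻¹' {u ω} := rfl
    rwa [← hB] at this
  have hω' : ω' ∈ u ⁻¹' {u ω} := by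
    rw [← hB]
    simpa [Set.mem_preimage, ← h] using hω
  exact (show u ω' = u ω from hω').symm

lemma cond_fiber_mul {Ω 𝒱 α β : Type*} {mΩ : MeasurableSpace Ω}
    [StandardBorelSpace Ω] [Nonempty Ω] [Fintype Ω]
    [MeasurableSpace 𝒱] [MeasurableSingletonClass 𝒱]
    [MeasurableSpace α] [MeasurableSpace β]
    (μ : Measure Ω) [IsProbabilityMeasure μ]
    {V : Ω → 𝒱} (hV : Measurable V) {f : Ω → α} {g : Ω → β}
    (hf : Measurable f) (hg : Measurable g)
    (h : CondIndepFun (MeasurableSpace.comap V inferInstance) hV.comap_le f g μ)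
    {s : Set α} {t : Set β} (hs : MeasurableSet s) (ht : MeasurableSet t) (v : 𝒱) :
    μ (V ⁻¹' {v}) * μ (f ⁻¹' s ∩ g ⁻¹' t ∩ V ⁻¹' {v})
      = μ (f ⁻¹' s ∩ V ⁻¹' {v}) * μ (g ⁻¹' t ∩ V ⁻¹' {v}) := by
  classical
  have hm : MeasurableSpace.comap V inferInstance ≤ mΩ := hV.comap_le
  have hA : MeasurableSet (V ⁻¹' {v}) := hV (measurableSet_singleton v)
  have hAm : MeasurableSet[MeasurableSpace.comap V inferInstance] (V ⁻¹' {v}) :=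
    ⟨{v}, measurableSet_singleton v, rfl⟩
  by_cases h0 : μ (V ⁻¹' {v}) = 0
  · rw [h0, zero_mul]
    rw [measure_mono_null Set.inter_subset_right h0, zero_mul]
  obtain ⟨ω₀, hω₀⟩ : (V ⁻¹' {v}).Nonempty := by
    rw [Set.nonempty_iff_ne_empty]
    intro he
    exact h0 (by rw [he, measure_empty])
  have hS : MeasurableSet (f ⁻¹' s) := hf hs
  have hT : MeasurableSet (g ⁻¹' t) := hg ht
  have hae := (condIndepFun_iff_condExp_inter_preimage_eq_mul hf hg).mp h s t hs ht
  set u : Ω → ℝ := (μ⟦f ⁻¹' s | MeasurableSpace.comap V inferInstance⟧) with hu_def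
  set w : Ω → ℝ := (μ⟦g ⁻¹' t | MeasurableSpace.comap V inferInstance⟧) with hw_def
  have hum : Measurable[MeasurableSpace.comap V inferInstance] u :=
    stronglyMeasurable_condExp.measurable
  have hwm : Measurable[MeasurableSpace.comap V inferInstance] w :=
    stronglyMeasurable_condExp.measurable
  have hconst_u : ∀ x ∈ V ⁻¹' {v}, u x = u ω₀ := fun x hx =>
    comap_measurable_const_on_fiber hum (hx.trans hω₀.symm)
  have hconst_w : ∀ x ∈ V ⁻¹' {v}, w x = w ω₀ := fun x hx =>
    comap_measurable_const_on_fiber hwm (hx.trans hω₀.symm)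
  have hint : ∀ (E : Set Ω), MeasurableSet E →
      ∫ x in V ⁻¹' {v}, (μ⟦E | MeasurableSpace.comap V inferInstance⟧) x ∂μ
        = (μ (E ∩ V ⁻¹' {v})).toReal := by
    intro E hE
    rw [setIntegral_condExp hm (Integrable.of_finite) hAm]
    rw [setIntegral_indicator hE, setIntegral_const, Set.inter_comm]
    simp; rfl
  have e1 : (μ (f ⁻¹' s ∩ V ⁻¹' {v})).toReal = (μ (V ⁻¹' {v})).toReal * u ω₀ := by
    rw [← hint (f ⁻¹' s) hS, hu_def,
      setIntegral_congr_fun hA hconst_u, setIntegral_const, smul_eq_mul]; rfl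
  have e2 : (μ (g ⁻¹' t ∩ V ⁻¹' {v})).toReal = (μ (V ⁻¹' {v})).toReal * w ω₀ := by
    rw [← hint (g ⁻¹' t) hT, hw_def,
      setIntegral_congr_fun hA hconst_w, setIntegral_const, smul_eq_mul]; rfl
  have e3 : (μ (f ⁻¹' s ∩ g ⁻¹' t ∩ V ⁻¹' {v})).toReal
      = (μ (V ⁻¹' {v})).toReal * (u ω₀ * w ω₀) := by
    rw [← hint (f ⁻¹' s ∩ g ⁻¹' t) (hS.inter hT)]
    have h1 : ∫ x in V ⁻¹' {v},
        (μ⟦f ⁻¹' s ∩ g ⁻¹' t | MeasurableSpace.comap V inferInstance⟧) x ∂μ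
        = ∫ x in V ⁻¹' {v}, u x * w x ∂μ :=
      setIntegral_congr_ae hA (hae.mono fun x hx _ => hx)
    rw [h1, setIntegral_congr_fun hA
      (fun x hx => by
        show u x * w x = u ω₀ * w ω₀
        rw [hconst_u x hx, hconst_w x hx]),
      setIntegral_const, smul_eq_mul]; rfl
  have hreal : (μ (V ⁻¹' {v})).toReal * (μ (f ⁻¹' s ∩ g ⁻¹' t ∩ V ⁻¹' {v})).toReal
      = (μ (f ⁻¹' s ∩ V ⁻¹' {v})).toReal * (μ (g ⁻¹' t ∩ V ⁻¹' {v})).toReal := by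
    rw [e1, e2, e3]; ring
  have hfin : ∀ (E : Set Ω), μ E ≠ ⊤ := fun E => measure_ne_top μ E
  rw [← ENNReal.toReal_eq_toReal_iff' (ENNReal.mul_ne_top (hfin _) (hfin _))
    (ENNReal.mul_ne_top (hfin _) (hfin _)), ENNReal.toReal_mul, ENNReal.toReal_mul]
  exact hreal
end helpers

/-- **HCI model implies the factorization of Theorem 5 (easy direction of Proposition 2).**
Suppose `X₁` and `X₂` are conditionally independent given `W`, `θ` and `(X₁, X₂)` are
conditionally independent given `W`, and `W` and `X₁` are conditionally independent given
`T₁(X₁)`. Then there exist nonnegative functions `g` and `f` such that the joint pmf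
satisfies `p(x₁, x₂, t) = g(x₁) · f(T₁(x₁), x₂, t)` for all `x₁, x₂, t`. -/
theorem hci_implies_factorization
    {Ω Θ 𝒲 𝒳₁ 𝒳₂ 𝒯₁ : Type*}
    [MeasurableSpace Ω] [StandardBorelSpace Ω] [Nonempty Ω] [Fintype Ω]
    [Fintype Θ] [MeasurableSpace Θ] [MeasurableSingletonClass Θ]
    [Fintype 𝒲] [MeasurableSpace 𝒲] [MeasurableSingletonClass 𝒲]
    [Fintype 𝒳₁] [MeasurableSpace 𝒳₁] [MeasurableSingletonClass 𝒳₁]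
    [Fintype 𝒳₂] [MeasurableSpace 𝒳₂] [MeasurableSingletonClass 𝒳₂]
    [Fintype 𝒯₁] [MeasurableSpace 𝒯₁] [MeasurableSingletonClass 𝒯₁]
    (μ : Measure Ω) [IsProbabilityMeasure μ]
    (θ : Ω → Θ) (W : Ω → 𝒲) (X₁ : Ω → 𝒳₁) (X₂ : Ω → 𝒳₂) (T₁ : 𝒳₁ → 𝒯₁)
    (hθ : Measurable θ) (hW : Measurable W) (hX₁ : Measurable X₁) (hX₂ : Measurable X₂)
    (hT₁ : Measurable T₁)
    -- HCI: X₁ and X₂ are conditionally independent given W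
    (hci : CondIndepFun (MeasurableSpace.comap W inferInstance) hW.comap_le X₁ X₂ μ)
    -- HCI: θ and (X₁, X₂) are conditionally independent given W
    (hθW : CondIndepFun (MeasurableSpace.comap W inferInstance) hW.comap_le
      θ (fun ω => (X₁ ω, X₂ ω)) μ)
    -- W and X₁ are conditionally independent given T₁(X₁)
    (hloc₁ : CondIndepFun (MeasurableSpace.comap (fun ω => T₁ (X₁ ω)) inferInstance)
      ((hT₁.comp hX₁).comap_le) W X₁ μ) :
    -- the joint pmf factorizes as p(x₁, x₂, t) = g(x₁) · f(T₁(x₁), x₂, t)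
    ∃ (g : 𝒳₁ → NNReal) (f : 𝒯₁ × 𝒳₂ × Θ → NNReal),
      ∀ (x₁ : 𝒳₁) (x₂ : 𝒳₂) (t : Θ),
        μ {ω | X₁ ω = x₁ ∧ X₂ ω = x₂ ∧ θ ω = t}
          = (g x₁ : ℝ≥0∞) * (f (T₁ x₁, x₂, t) : ℝ≥0∞) := by
  classical
  set Pr : Set Ω → NNReal := fun A => (μ A).toNNReal with hPr_def
  have Pcoe : ∀ A : Set Ω, (Pr A : ℝ≥0∞) = μ A := fun A =>
    ENNReal.coe_toNNReal (measure_ne_top μ A)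
  have Pmono : ∀ {A B : Set Ω}, A ⊆ B → Pr A ≤ Pr B := fun h =>
    ENNReal.toNNReal_mono (measure_ne_top μ _) (measure_mono h)
  have PrMul : ∀ {a b c d : Set Ω}, μ a * μ b = μ c * μ d →
      Pr a * Pr b = Pr c * Pr d := by
    intro a b c d h
    rw [hPr_def]
    simp only [← ENNReal.toNNReal_mul, h]
  set g : 𝒳₁ → NNReal := fun x₁ => Pr (X₁ ⁻¹' {x₁}) with hg_def
  set f : 𝒯₁ × 𝒳₂ × Θ → NNReal := fun q => ∑ w : 𝒲,
      (Pr (W ⁻¹' {w} ∩ (fun ω => T₁ (X₁ ω)) ⁻¹' {q.1})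
          / Pr ((fun ω => T₁ (X₁ ω)) ⁻¹' {q.1}))
        * (Pr (θ ⁻¹' {q.2.2} ∩ W ⁻¹' {w}) * Pr (X₂ ⁻¹' {q.2.1} ∩ W ⁻¹' {w})
          / (Pr (W ⁻¹' {w})) ^ 2) with hf_def
  refine ⟨g, f, fun x₁ x₂ t => ?_⟩
  set S : Set Ω := X₁ ⁻¹' {x₁} ∩ X₂ ⁻¹' {x₂} ∩ θ ⁻¹' {t} with hS_def
  have hSmeas : MeasurableSet S :=
    ((hX₁ (measurableSet_singleton x₁)).inter
      (hX₂ (measurableSet_singleton x₂))).inter (hθ (measurableSet_singleton t))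
  have hset : {ω | X₁ ω = x₁ ∧ X₂ ω = x₂ ∧ θ ω = t} = S := by
    ext ω; simp [hS_def, and_assoc]
  -- per-fiber factorization, in NNReal
  have perw : ∀ w : 𝒲, Pr (S ∩ W ⁻¹' {w})
      = g x₁ * ((Pr (W ⁻¹' {w} ∩ (fun ω => T₁ (X₁ ω)) ⁻¹' {T₁ x₁})
            / Pr ((fun ω => T₁ (X₁ ω)) ⁻¹' {T₁ x₁}))
          * (Pr (θ ⁻¹' {t} ∩ W ⁻¹' {w}) * Pr (X₂ ⁻¹' {x₂} ∩ W ⁻¹' {w})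
            / (Pr (W ⁻¹' {w})) ^ 2)) := by
    intro w
    set V : Ω → 𝒯₁ := fun ω => T₁ (X₁ ω) with hV_def
    have hVmeas : Measurable V := hT₁.comp hX₁
    -- F1
    have F1 : Pr (W ⁻¹' {w}) * Pr (X₁ ⁻¹' {x₁} ∩ X₂ ⁻¹' {x₂} ∩ W ⁻¹' {w})
        = Pr (X₁ ⁻¹' {x₁} ∩ W ⁻¹' {w}) * Pr (X₂ ⁻¹' {x₂} ∩ W ⁻¹' {w}) :=
      PrMul (cond_fiber_mul μ hW hX₁ hX₂ hci
        (measurableSet_singleton x₁) (measurableSet_singleton x₂) w)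
    -- F2
    have hpair : (fun ω => (X₁ ω, X₂ ω)) ⁻¹' {(x₁, x₂)}
        = X₁ ⁻¹' {x₁} ∩ X₂ ⁻¹' {x₂} := by
      ext ω; simp [Prod.ext_iff]
    have F2' := PrMul (cond_fiber_mul μ hW hθ (hX₁.prodMk hX₂) hθW
      (measurableSet_singleton t) (measurableSet_singleton (x₁, x₂)) w)
    rw [hpair] at F2'
    have hsets : θ ⁻¹' {t} ∩ (X₁ ⁻¹' {x₁} ∩ X₂ ⁻¹' {x₂}) ∩ W ⁻¹' {w}
        = S ∩ W ⁻¹' {w} := by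
      ext ω; simp [hS_def]; tauto
    rw [hsets] at F2'
    -- F3
    have F3' := PrMul (cond_fiber_mul μ hVmeas hW hX₁ hloc₁
      (measurableSet_singleton w) (measurableSet_singleton x₁) (T₁ x₁))
    have hsub : X₁ ⁻¹' {x₁} ⊆ V ⁻¹' {T₁ x₁} := by
      intro ω hω
      simp only [Set.mem_preimage, Set.mem_singleton_iff] at hω ⊢
      rw [hV_def]; simp [hω]
    have hx1v : X₁ ⁻¹' {x₁} ∩ V ⁻¹' {T₁ x₁} = X₁ ⁻¹' {x₁} :=
      Set.inter_eq_left.mpr hsub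
    have hwx1v : W ⁻¹' {w} ∩ X₁ ⁻¹' {x₁} ∩ V ⁻¹' {T₁ x₁}
        = X₁ ⁻¹' {x₁} ∩ W ⁻¹' {w} := by
      rw [Set.inter_assoc, hx1v, Set.inter_comm]
    rw [hwx1v, hx1v] at F3'
    -- abbreviations
    set a := Pr (W ⁻¹' {w}) with ha_def
    set b := Pr (V ⁻¹' {T₁ x₁}) with hb_def
    set gx := Pr (X₁ ⁻¹' {x₁}) with hgx_def
    set q1 := Pr (X₁ ⁻¹' {x₁} ∩ W ⁻¹' {w}) with hq1_def
    set q2 := Pr (X₂ ⁻¹' {x₂} ∩ W ⁻¹' {w}) with hq2_def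
    set q12 := Pr (X₁ ⁻¹' {x₁} ∩ X₂ ⁻¹' {x₂} ∩ W ⁻¹' {w}) with hq12_def
    set r := Pr (θ ⁻¹' {t} ∩ W ⁻¹' {w}) with hr_def
    set top := Pr (S ∩ W ⁻¹' {w}) with htop_def
    set wt := Pr (W ⁻¹' {w} ∩ V ⁻¹' {T₁ x₁}) with hwt_def
    show top = gx * ((wt / b) * (r * q2 / a ^ 2))
    have htop_le_gx : top ≤ gx := Pmono (fun ω hω => hω.1.1.1)
    have htop_le_a : top ≤ a := Pmono Set.inter_subset_right
    have hr_le_a : r ≤ a := Pmono Set.inter_subset_right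
    have hgx_le_b : gx ≤ b := Pmono hsub
    by_cases ha0 : a = 0
    · have h1 : top = 0 := le_antisymm (ha0 ▸ htop_le_a) (zero_le)
      have h2 : r = 0 := le_antisymm (ha0 ▸ hr_le_a) (zero_le)
      rw [h1, h2]; simp
    by_cases hb0 : b = 0
    · have h1 : gx = 0 := le_antisymm (hb0 ▸ hgx_le_b) (zero_le)
      have h2 : top = 0 := le_antisymm (h1 ▸ htop_le_gx) (zero_le)
      rw [h1, h2]; simp
    have hcancel : (a ^ 2 * b) ≠ 0 := mul_ne_zero (pow_ne_zero _ ha0) hb0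
    refine mul_left_cancel₀ hcancel ?_
    have hb1 : b * (wt / b) = wt := by field_simp
    have ha1 : a ^ 2 * (r * q2 / a ^ 2) = r * q2 := by field_simp
    calc a ^ 2 * b * top = a * b * (a * top) := by ring
      _ = a * b * (r * q12) := by rw [F2']
      _ = b * r * (a * q12) := by ring
      _ = b * r * (q1 * q2) := by rw [F1]
      _ = r * q2 * (b * q1) := by ring
      _ = r * q2 * (wt * gx) := by rw [F3']
      _ = gx * (b * (wt / b)) * (a ^ 2 * (r * q2 / a ^ 2)) := by rw [hb1, ha1]; ring
      _ = a ^ 2 * b * (gx * (wt / b * (r * q2 / a ^ 2))) := by ring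
  -- decompose the measure over fibers of W
  have hdecomp : μ S = ∑ w : 𝒲, μ (S ∩ W ⁻¹' {w}) := by
    have hU : S = ⋃ w : 𝒲, S ∩ W ⁻¹' {w} := by
      ext ω; simp
    have hdisj : Pairwise (Function.onFun Disjoint fun w : 𝒲 => S ∩ W ⁻¹' {w}) := by
      intro i j hij
      simp only [Function.onFun]
      rw [Set.disjoint_left]
      rintro ω ⟨-, h1⟩ ⟨-, h2⟩
      exact hij ((Set.mem_singleton_iff.mp h1).symm.trans (Set.mem_singleton_iff.mp h2))
    conv_lhs => rw [hU]
    rw [measure_iUnion hdisj (fun w => hSmeas.inter (hW (measurableSet_singleton w))),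
      tsum_fintype]
  rw [hset, hdecomp]
  have hrhs : (g x₁ : ℝ≥0∞) * (f (T₁ x₁, x₂, t) : ℝ≥0∞)
      = ∑ w : 𝒲, ((g x₁ * ((Pr (W ⁻¹' {w} ∩ (fun ω => T₁ (X₁ ω)) ⁻¹' {T₁ x₁})
            / Pr ((fun ω => T₁ (X₁ ω)) ⁻¹' {T₁ x₁}))
          * (Pr (θ ⁻¹' {t} ∩ W ⁻¹' {w}) * Pr (X₂ ⁻¹' {x₂} ∩ W ⁻¹' {w})
            / (Pr (W ⁻¹' {w})) ^ 2)) : NNReal) : ℝ≥0∞) := by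
    rw [← ENNReal.coe_mul, hf_def, Finset.mul_sum, ENNReal.coe_finset_sum]
  rw [hrhs]
  refine Finset.sum_congr rfl fun w _ => ?_
  rw [← perw w, Pcoe]
end
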